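/- arXiv:1208.1430 — 9 statements merged into one kernel-verified Lean document; each statement's English description precedes it below -/
import Mathlib

section
/- Let F be an asymmetric norm on ℝ² and let u, v ∈ ℝ² ∖ {0}. Suppose F is differentiable at u and at v. Then u and v form an F-acute angle if and only if ⟨u, ∇F(v)⟩ ≥ 0 and ⟨v, ∇F(u)⟩ ≥ 0. -/
open scoped RealInnerProductSpace
open MeasureTheory Real Filter

noncomputable section

abbrev E2 : Type := EuclideanSpace ℝ (Fin 2)

def mk2 (a b : ℝ) : E2 := WithLp.toLp 2 ![a, b]

def IsAsymNorm (F : E2 → ℝ) : Prop :=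
  ConvexOn ℝ Set.univ F ∧
  (∀ (c : ℝ), 0 ≤ c → ∀ u : E2, F (c • u) = c * F u) ∧
  (∀ u : E2, 0 ≤ F u) ∧
  (∀ u : E2, u ≠ 0 → 0 < F u)

def IsAcute (F : E2 → ℝ) (u v : E2) : Prop :=
  ∀ δ : ℝ, 0 ≤ δ → F u ≤ F (u + δ • v) ∧ F v ≤ F (v + δ • u)

noncomputable def kappa (F : E2 → ℝ) : ℝ :=
  sSup {r : ℝ | ∃ u v : E2, ‖u‖ = 1 ∧ ‖v‖ = 1 ∧ r = F u / F v}

def det2 (u v : E2) : ℝ := u 0 * v 1 - u 1 * v 0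

def IsIntVec (u : E2) : Prop := (∃ n : ℤ, u 0 = (n : ℝ)) ∧ (∃ n : ℤ, u 1 = (n : ℝ))

def eTheta (θ : ℝ) : E2 := mk2 (Real.cos θ) (Real.sin θ)

noncomputable def phiF (F : E2 → ℝ) (θ : ℝ) : ℝ :=
  Real.arctan (det2 (eTheta θ) (gradient F (eTheta θ)) / F (eTheta θ))

def rot2 (θ : ℝ) (w : E2) : E2 :=
  mk2 (Real.cos θ * w 0 - Real.sin θ * w 1) (Real.sin θ * w 0 + Real.cos θ * w 1)

def perp (z : E2) : E2 := mk2 (-(z 1)) (z 0)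


lemma grad_inner_aux (F : E2 → ℝ) (u w : E2) :
    fderiv ℝ F u w = ⟪w, gradient F u⟫ := by
  rw [real_inner_comm]
  simp [gradient, ← InnerProductSpace.toDual_apply_apply]

lemma key_aux (F : E2 → ℝ) (hc : ConvexOn ℝ Set.univ F) (u w : E2)
    (hdu : DifferentiableAt ℝ F u) :
    (∀ δ : ℝ, 0 ≤ δ → F u ≤ F (u + δ • w)) ↔ 0 ≤ ⟪w, gradient F u⟫ := by
  set d : ℝ := fderiv ℝ F u w with hd
  have hline : HasLineDerivAt ℝ F d u w := hdu.hasFDerivAt.hasLineDerivAt w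
  rw [← grad_inner_aux]
  constructor
  · intro h
    refine ge_of_tendsto hline.tendsto_slope_zero_right ?_
    filter_upwards [self_mem_nhdsWithin] with t (ht : 0 < t)
    have := h t ht.le
    have h2 : 0 ≤ F (u + t • w) - F u := by linarith
    positivity
  · intro hdpos δ hδ
    rcases eq_or_lt_of_le hδ with rfl | hδ
    · simp
    have hg : ConvexOn ℝ Set.univ (fun t : ℝ => F (u + t • w)) := by
      have h1 := hc.comp_affineMap (AffineMap.lineMap u (u + w) : ℝ →ᵃ[ℝ] E2)
      simp only [Set.preimage_univ] at h1
      have hfun : (fun t : ℝ => F (u + t • w)) = F ∘ AffineMap.lineMap u (u + w) := by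
        funext t
        simp [Function.comp, AffineMap.lineMap_apply, add_comm]
      rw [hfun]
      exact h1
    have hdle : d ≤ (F (u + δ • w) - F u) / δ := by
      refine le_of_tendsto hline.tendsto_slope_zero_right ?_
      filter_upwards [Ioo_mem_nhdsGT_of_mem (Set.left_mem_Ico.2 hδ)] with t ht
      have hsec := hg.secant_mono (a := 0) (x := t) (y := δ)
        (Set.mem_univ _) (Set.mem_univ _) (Set.mem_univ _)
        ht.1.ne' hδ.ne' ht.2.le
      simp only [sub_zero, zero_smul, add_zero] at hsec
      rw [smul_eq_mul, inv_mul_eq_div]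
      exact hsec
    have h3 : 0 ≤ (F (u + δ • w) - F u) / δ := le_trans hdpos hdle
    rcases div_nonneg_iff.1 h3 with ⟨h1, _⟩ | ⟨_, h2⟩
    · linarith
    · linarith

/-- Characterization of `F`-acute angles via gradients, for an
asymmetric norm `F` differentiable at `u` and `v`. -/
theorem stmt0 (F : E2 → ℝ) (hF : IsAsymNorm F) (u v : E2) (hu : u ≠ 0) (hv : v ≠ 0)
    (hdu : DifferentiableAt ℝ F u) (hdv : DifferentiableAt ℝ F v) :
    IsAcute F u v ↔ 0 ≤ ⟪u, gradient F v⟫ ∧ 0 ≤ ⟪v, gradient F u⟫ := by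
  constructor
  · intro h
    exact ⟨(key_aux F hF.1 v u hdv).1 (fun δ hδ => (h δ hδ).2),
      (key_aux F hF.1 u v hdu).1 (fun δ hδ => (h δ hδ).1)⟩
  · rintro ⟨h1, h2⟩ δ hδ
    exact ⟨(key_aux F hF.1 u v hdu).2 h2 δ hδ, (key_aux F hF.1 v u hdv).2 h1 δ hδ⟩
end
end

section
/- (Causality Property) Let F be an asymmetric norm on ℝ², let u, v ∈ ℝ² be linearly independent, and let d_u, d_v ∈ ℝ. Assume that u and v form an F-acute angle. Define d_w := min over t ∈ [0,1] of t·d_u + (1−t)·d_v + F(t·u + (1−t)·v), and assume that this minimum is not attained at t = 0 nor at t = 1. Then d_u < d_w and d_v < d_w. -/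
open scoped RealInnerProductSpace
open MeasureTheory Real

noncomputable section

/-- Causality Property: if `u, v` are linearly independent and form an
`F`-acute angle, and the minimum `d_w` of `t ↦ t d_u + (1-t) d_v + F(t u + (1-t) v)`
over `[0,1]` is not attained at `t = 0` nor `t = 1`, then `d_u < d_w` and `d_v < d_w`. -/
theorem stmt2 (F : E2 → ℝ) (hF : IsAsymNorm F) (u v : E2)
    (hli : LinearIndependent ℝ ![u, v]) (du dv dw : ℝ) (f : ℝ → ℝ)
    (hf : ∀ t : ℝ, f t = t * du + (1 - t) * dv + F (t • u + (1 - t) • v))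
    (hacute : IsAcute F u v)
    (hmin : IsLeast (f '' Set.Icc (0:ℝ) 1) dw)
    (h0 : f 0 ≠ dw) (h1 : f 1 ≠ dw) :
    du < dw ∧ dv < dw := by
  obtain ⟨⟨t, ht, hft⟩, hlb⟩ := hmin
  have h0le : dw ≤ f 0 := hlb ⟨0, by norm_num, rfl⟩
  have h1le : dw ≤ f 1 := hlb ⟨1, by norm_num, rfl⟩
  have h0lt : dw < f 0 := lt_of_le_of_ne h0le (Ne.symm h0)
  have h1lt : dw < f 1 := lt_of_le_of_ne h1le (Ne.symm h1)
  have ht0 : 0 < t := by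
    rcases ht.1.lt_or_eq with h | h
    · exact h
    · subst h; exact absurd hft h0
  have ht1 : t < 1 := by
    rcases ht.2.lt_or_eq with h | h
    · exact h
    · subst h; exact absurd hft h1
  have h1t : (0:ℝ) < 1 - t := by linarith
  have hf0 : f 0 = dv + F v := by rw [hf]; norm_num
  have hf1 : f 1 = du + F u := by rw [hf]; norm_num
  have hhom := hF.2.1
  -- key 1 : F (t u + (1-t) v) ≥ (1-t) F v
  have e1 : (1 - t) • (v + (t / (1 - t)) • u) = t • u + (1 - t) • v := by
    rw [smul_add, smul_smul]
    have : (1 - t) * (t / (1 - t)) = t := by field_simp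
    rw [this, add_comm]
  have key1 : (1 - t) * F v ≤ F (t • u + (1 - t) • v) := by
    rw [← e1, hhom (1 - t) h1t.le]
    exact mul_le_mul_of_nonneg_left
      (hacute (t / (1 - t)) (by positivity)).2 h1t.le
  -- key 2 : F (t u + (1-t) v) ≥ t F u
  have e2 : t • (u + ((1 - t) / t) • v) = t • u + (1 - t) • v := by
    rw [smul_add, smul_smul]
    have : t * ((1 - t) / t) = 1 - t := by field_simp
    rw [this]
  have key2 : t * F u ≤ F (t • u + (1 - t) • v) := by
    rw [← e2, hhom t ht0.le]
    exact mul_le_mul_of_nonneg_left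
      (hacute ((1 - t) / t) (by positivity)).1 ht0.le
  have hfw : f t = t * du + (1 - t) * dv + F (t • u + (1 - t) • v) := hf t
  constructor
  · nlinarith [key1, h0lt, hf0, hfw, hft]
  · nlinarith [key2, h1lt, hf1, hfw, hft]
end
end

section
/- Let u, v ∈ ℤ² satisfy |det(u,v)| = 1 and ⟨u,v⟩ ≥ 0 (the non-zero vertices of an elementary triangle). Then the following are equivalent: (i) u and v both belong to {(1,0), (−1,0), (0,1), (0,−1)}; (ii) ‖u‖ = ‖v‖; (iii) ⟨u,v⟩ < min{‖u‖², ‖v‖²}. -/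
open scoped RealInnerProductSpace
open MeasureTheory Real

noncomputable section

private lemma eq_mk2_iff (u : E2) (x y : ℝ) : u = mk2 x y ↔ u 0 = x ∧ u 1 = y := by
  constructor
  · rintro rfl; simp [mk2]
  · rintro ⟨h0, h1⟩; ext i; fin_cases i <;> simp [mk2, h0, h1]

private lemma inner_eq (u v : E2) : ⟪u, v⟫ = u 0 * v 0 + u 1 * v 1 := by
  simp [PiLp.inner_apply, Fin.sum_univ_two]; ring

private lemma norm_sq_eq (u : E2) : ‖u‖ ^ 2 = u 0 ^ 2 + u 1 ^ 2 := by
  rw [EuclideanSpace.norm_eq, Real.sq_sqrt (by positivity)]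
  simp [Fin.sum_univ_two]

private lemma sq_one_iff (m n : ℤ) (h : m ^ 2 + n ^ 2 = 1) :
    (m = 1 ∧ n = 0) ∨ (m = -1 ∧ n = 0) ∨ (m = 0 ∧ n = 1) ∨ (m = 0 ∧ n = -1) := by
  have h1 : -1 ≤ m ∧ m ≤ 1 := by
    constructor <;> nlinarith [sq_nonneg n, sq_nonneg (m - 1), sq_nonneg (m + 1)]
  have h2 : -1 ≤ n ∧ n ≤ 1 := by
    constructor <;> nlinarith [sq_nonneg m, sq_nonneg (n - 1), sq_nonneg (n + 1)]
  obtain ⟨a, b⟩ := h1; obtain ⟨c, d⟩ := h2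
  interval_cases m <;> interval_cases n <;> omega

private lemma key_int (m n p q : ℤ) (hdet : |m * q - n * p| = 1) (hs : 0 ≤ m * p + n * q) :
    ((m ^ 2 + n ^ 2 = 1 ∧ p ^ 2 + q ^ 2 = 1) ↔ m ^ 2 + n ^ 2 = p ^ 2 + q ^ 2) ∧
    (m ^ 2 + n ^ 2 = p ^ 2 + q ^ 2 ↔
      m * p + n * q < m ^ 2 + n ^ 2 ∧ m * p + n * q < p ^ 2 + q ^ 2) := by
  have hD : (m * q - n * p) ^ 2 = 1 := by
    have := sq_abs (m * q - n * p); rw [hdet] at this; omega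
  have hid : (m ^ 2 + n ^ 2) * (p ^ 2 + q ^ 2) = (m * p + n * q) ^ 2 + 1 := by
    nlinarith [hD]
  set P := m ^ 2 + n ^ 2 with hP
  set Q := p ^ 2 + q ^ 2 with hQ
  set s := m * p + n * q with hsdef
  clear_value P Q s
  have hP1 : 1 ≤ P := by
    nlinarith [sq_nonneg s, sq_nonneg m, sq_nonneg n, sq_nonneg p, sq_nonneg q]
  have hQ1 : 1 ≤ Q := by
    nlinarith [sq_nonneg s, sq_nonneg m, sq_nonneg n, sq_nonneg p, sq_nonneg q]
  have main : ∀ A B : ℤ, 1 ≤ A → 1 ≤ B → A * B = s ^ 2 + 1 → s < A → s < B →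
      s = 0 ∧ A = 1 ∧ B = 1 := by
    intro A B hA hB hAB h1 h2
    have hs0 : s = 0 := by
      nlinarith [mul_nonneg (by omega : (0:ℤ) ≤ A - s - 1) (by omega : (0:ℤ) ≤ B - s - 1)]
    subst hs0
    simp at hAB
    exact ⟨rfl, by nlinarith, by nlinarith⟩
  have eqc : P = Q → s = 0 ∧ P = 1 := by
    intro h
    have hPs : s < P := by nlinarith
    have := main P Q hP1 hQ1 hid hPs (h ▸ hPs)
    tauto
  constructor
  · constructor
    · rintro ⟨h1, h2⟩; omega
    · intro h; obtain ⟨_, h1⟩ := eqc h; omega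
  · constructor
    · intro h; obtain ⟨hs0, h1⟩ := eqc h; omega
    · rintro ⟨h1, h2⟩
      obtain ⟨_, _, _⟩ := main P Q hP1 hQ1 hid h1 h2
      omega

/-- for `u, v ∈ ℤ²` with `|det(u,v)| = 1` and `⟨u,v⟩ ≥ 0`, the following
are equivalent: (i) `u, v ∈ {(1,0),(-1,0),(0,1),(0,-1)}`; (ii) `‖u‖ = ‖v‖`;
(iii) `⟨u,v⟩ < min{‖u‖², ‖v‖²}`. -/
theorem stmt3 (u v : E2) (hu : IsIntVec u) (hv : IsIntVec v)
    (hdet : |det2 u v| = 1) (hs : 0 ≤ ⟪u, v⟫) :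
    ((u ∈ ({mk2 1 0, mk2 (-1) 0, mk2 0 1, mk2 0 (-1)} : Set E2) ∧
      v ∈ ({mk2 1 0, mk2 (-1) 0, mk2 0 1, mk2 0 (-1)} : Set E2)) ↔ ‖u‖ = ‖v‖) ∧
    (‖u‖ = ‖v‖ ↔ ⟪u, v⟫ < min (‖u‖ ^ 2) (‖v‖ ^ 2)) := by
  obtain ⟨⟨m, hm⟩, ⟨n, hn⟩⟩ := hu
  obtain ⟨⟨p, hp⟩, ⟨q, hq⟩⟩ := hv
  have hdet' : |m * q - n * p| = 1 := by
    have : det2 u v = ((m * q - n * p : ℤ) : ℝ) := by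
      simp only [det2, hm, hn, hp, hq]; push_cast; ring
    rw [this] at hdet
    exact_mod_cast (by rwa [← Int.cast_abs] at hdet : ((|m * q - n * p| : ℤ) : ℝ) = 1)
  have hinner : ⟪u, v⟫ = ((m * p + n * q : ℤ) : ℝ) := by
    rw [inner_eq, hm, hn, hp, hq]; push_cast; ring
  have hs' : 0 ≤ m * p + n * q := by
    rw [hinner] at hs; exact_mod_cast hs
  have hnu : ‖u‖ ^ 2 = ((m ^ 2 + n ^ 2 : ℤ) : ℝ) := by
    rw [norm_sq_eq, hm, hn]; push_cast; ring
  have hnv : ‖v‖ ^ 2 = ((p ^ 2 + q ^ 2 : ℤ) : ℝ) := by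
    rw [norm_sq_eq, hp, hq]; push_cast; ring
  obtain ⟨k1, k2⟩ := key_int m n p q hdet' hs'
  have hnorm_iff : ‖u‖ = ‖v‖ ↔ m ^ 2 + n ^ 2 = p ^ 2 + q ^ 2 := by
    constructor
    · intro h
      have : ‖u‖ ^ 2 = ‖v‖ ^ 2 := by rw [h]
      rw [hnu, hnv] at this; exact_mod_cast this
    · intro h
      have : ‖u‖ ^ 2 = ‖v‖ ^ 2 := by rw [hnu, hnv]; exact_mod_cast h
      nlinarith [norm_nonneg u, norm_nonneg v]
  have humem : u ∈ ({mk2 1 0, mk2 (-1) 0, mk2 0 1, mk2 0 (-1)} : Set E2) ↔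
      m ^ 2 + n ^ 2 = 1 := by
    simp only [Set.mem_insert_iff, Set.mem_singleton_iff, eq_mk2_iff, hm, hn]
    constructor
    · rintro (⟨h1, h2⟩ | ⟨h1, h2⟩ | ⟨h1, h2⟩ | ⟨h1, h2⟩) <;>
      · have : ((m : ℝ)) ^ 2 + ((n : ℝ)) ^ 2 = 1 := by rw [h1, h2]; norm_num
        exact_mod_cast this
    · intro h
      rcases sq_one_iff m n h with ⟨e1, e2⟩ | ⟨e1, e2⟩ | ⟨e1, e2⟩ | ⟨e1, e2⟩ <;>
        subst e1 <;> subst e2 <;> norm_num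
  have hvmem : v ∈ ({mk2 1 0, mk2 (-1) 0, mk2 0 1, mk2 0 (-1)} : Set E2) ↔
      p ^ 2 + q ^ 2 = 1 := by
    simp only [Set.mem_insert_iff, Set.mem_singleton_iff, eq_mk2_iff, hp, hq]
    constructor
    · rintro (⟨h1, h2⟩ | ⟨h1, h2⟩ | ⟨h1, h2⟩ | ⟨h1, h2⟩) <;>
      · have : ((p : ℝ)) ^ 2 + ((q : ℝ)) ^ 2 = 1 := by rw [h1, h2]; norm_num
        exact_mod_cast this
    · intro h
      rcases sq_one_iff p q h with ⟨e1, e2⟩ | ⟨e1, e2⟩ | ⟨e1, e2⟩ | ⟨e1, e2⟩ <;>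
        subst e1 <;> subst e2 <;> norm_num
  constructor
  · rw [humem, hvmem, hnorm_iff]; exact k1
  · rw [hnorm_iff, hinner, hnu, hnv, k2]
    constructor
    · rintro ⟨h1, h2⟩
      rw [lt_min_iff]
      exact ⟨by exact_mod_cast h1, by exact_mod_cast h2⟩
    · intro h
      rw [lt_min_iff] at h
      exact ⟨by exact_mod_cast h.1, by exact_mod_cast h.2⟩
end
end

section
/- Let F be an asymmetric norm on ℝ² and let u, v ∈ ℝ² ∖ {0} form an F-acute angle. Then u and u+v form an F-acute angle, and v and u+v form an F-acute angle. -/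
open scoped RealInnerProductSpace
open MeasureTheory Real

noncomputable section

lemma mono_aux (F : E2 → ℝ) (hconv : ConvexOn ℝ Set.univ F) (w z : E2)
    (hge : ∀ s : ℝ, 0 ≤ s → F w ≤ F (w + s • z)) :
    ∀ a b : ℝ, 0 ≤ a → a ≤ b → F (w + a • z) ≤ F (w + b • z) := by
  intro a b ha hab
  rcases ha.eq_or_lt with h0 | ha'
  · simpa [← h0] using hge b (ha.trans hab)
  · have hb : 0 < b := lt_of_lt_of_le ha' hab
    set t := a / b with htdef
    have ht0 : 0 < t := div_pos ha' hb
    have ht1 : t ≤ 1 := div_le_one_of_le₀ hab hb.le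
    have key : w + a • z = (1 - t) • w + t • (w + b • z) := by
      have htb : t * b = a := div_mul_cancel₀ a hb.ne'
      rw [smul_add, smul_smul, htb]
      module
    have hcv := hconv.2 (Set.mem_univ w) (Set.mem_univ (w + b • z))
      (by linarith : (0:ℝ) ≤ 1 - t) ht0.le (by ring)
    rw [← key] at hcv
    simp only [smul_eq_mul] at hcv
    have h1 := hge a ha
    nlinarith [hcv, h1, ht0]

lemma homog_step (F : E2 → ℝ) (hF : IsAsymNorm F) (w z : E2) (δ : ℝ) (hδ : 0 ≤ δ)
    (hge : ∀ s : ℝ, 0 ≤ s → F w ≤ F (w + s • z)) :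
    F w ≤ F (w + δ • (w + z)) := by
  obtain ⟨hconv, hhom, hnn, hpos⟩ := hF
  have h1 : (0:ℝ) < 1 + δ := by linarith
  have key : w + δ • (w + z) = (1 + δ) • (w + (δ / (1 + δ)) • z) := by
    have : (1 + δ) * (δ / (1 + δ)) = δ := mul_div_cancel₀ δ h1.ne'
    rw [smul_add, smul_add, smul_smul, this]
    module
  rw [key, hhom (1 + δ) h1.le]
  have h2 := hge (δ / (1 + δ)) (div_nonneg hδ h1.le)
  nlinarith [hnn w]

/-- if `u, v` form an `F`-acute angle, then so do `u, u+v` and `v, u+v`. -/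
theorem stmt6 (F : E2 → ℝ) (hF : IsAsymNorm F) (u v : E2) (hu : u ≠ 0) (hv : v ≠ 0)
    (hacute : IsAcute F u v) :
    IsAcute F u (u + v) ∧ IsAcute F v (u + v) := by
  obtain ⟨hconv, hhom, hnn, hpos⟩ := hF
  have hgu : ∀ s : ℝ, 0 ≤ s → F u ≤ F (u + s • v) := fun s hs => (hacute s hs).1
  have hgv : ∀ s : ℝ, 0 ≤ s → F v ≤ F (v + s • u) := fun s hs => (hacute s hs).2
  constructor
  · intro δ hδ
    constructor
    · exact homog_step F ⟨hconv, hhom, hnn, hpos⟩ u v δ hδ hgu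
    · have := mono_aux F hconv v u hgv 1 (1 + δ) zero_le_one (by linarith)
      have e1 : v + (1:ℝ) • u = u + v := by module
      have e2 : v + (1 + δ) • u = (u + v) + δ • u := by module
      rw [e1, e2] at this
      simpa [e1] using this
  · intro δ hδ
    constructor
    · have key : v + δ • (u + v) = v + δ • (v + u) := by module
      rw [key]
      exact homog_step F ⟨hconv, hhom, hnn, hpos⟩ v u δ hδ hgv
    · have := mono_aux F hconv u v hgu 1 (1 + δ) zero_le_one (by linarith)
      have e1 : u + (1:ℝ) • v = u + v := by module
      have e2 : u + (1 + δ) • v = (u + v) + δ • v := by module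
      rw [e1, e2] at this
      simpa using this
end
end

section
/- Let F be an asymmetric norm on ℝ² with anisotropy ratio κ(F), and let u, v ∈ ℤ² satisfy |det(u,v)| = 1 and ⟨u,v⟩ ≥ √(κ(F)² − 1). Then u and v form an F-acute angle. -/
open scoped RealInnerProductSpace
open MeasureTheory Real

noncomputable section

lemma aux_sqrt_bound (S M : ℝ) (hS0 : 0 ≤ S) (h : S ≤ M * Real.sqrt S) :
    S ≤ M ^ 2 := by
  nlinarith [Real.sq_sqrt hS0, Real.sqrt_nonneg S, sq_nonneg (Real.sqrt S - M)]

lemma aux_alg_main (m M κ p0 p1 u0 u1 v0 v1 : ℝ)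
    (hm0 : 0 < m) (hMm : m ≤ M) (hMκ : M ≤ κ * m)
    (hdet : (u0 * v1 - u1 * v0) ^ 2 = 1)
    (hB : Real.sqrt (κ ^ 2 - 1) ≤ u0 * v0 + u1 * v1)
    (hpM : p0 ^ 2 + p1 ^ 2 ≤ M ^ 2)
    (hAm : m * Real.sqrt (u0 ^ 2 + u1 ^ 2) ≤ u0 * p0 + u1 * p1) :
    0 ≤ v0 * p0 + v1 * p1 := by
  have hκ1 : 1 ≤ κ := by nlinarith
  have hB0 : 0 ≤ u0 * v0 + u1 * v1 := le_trans (Real.sqrt_nonneg _) hB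
  have hκB : κ ^ 2 - 1 ≤ (u0 * v0 + u1 * v1) ^ 2 := by
    have h1 : (0:ℝ) ≤ κ ^ 2 - 1 := by nlinarith
    have h2 := Real.sq_sqrt h1
    nlinarith [Real.sqrt_nonneg (κ ^ 2 - 1)]
  have hn0 : 0 < u0 ^ 2 + u1 ^ 2 := by
    nlinarith [sq_nonneg v0, sq_nonneg v1, sq_nonneg (u0 * v0 + u1 * v1)]
  have hsn : 0 < Real.sqrt (u0 ^ 2 + u1 ^ 2) := Real.sqrt_pos.2 hn0
  have hA0 : 0 < u0 * p0 + u1 * p1 := lt_of_lt_of_le (by positivity) hAm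
  have hA2 : m ^ 2 * (u0 ^ 2 + u1 ^ 2) ≤ (u0 * p0 + u1 * p1) ^ 2 := by
    nlinarith [Real.sq_sqrt hn0.le, Real.sqrt_nonneg (u0 ^ 2 + u1 ^ 2), hm0.le, hAm,
      mul_nonneg hm0.le (Real.sqrt_nonneg (u0 ^ 2 + u1 ^ 2))]
  have hD2 : (u0 * p1 - u1 * p0) ^ 2
      ≤ (u0 * p0 + u1 * p1) ^ 2 * (u0 * v0 + u1 * v1) ^ 2 := by
    have hLag : (u0 * p0 + u1 * p1) ^ 2 + (u0 * p1 - u1 * p0) ^ 2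
        = (u0 ^ 2 + u1 ^ 2) * (p0 ^ 2 + p1 ^ 2) := by ring
    have hM2 : M ^ 2 ≤ κ ^ 2 * m ^ 2 := by nlinarith
    have h5 : (m ^ 2 * (u0 ^ 2 + u1 ^ 2)) * κ ^ 2
        ≤ (u0 * p0 + u1 * p1) ^ 2 * ((u0 * v0 + u1 * v1) ^ 2 + 1) :=
      mul_le_mul hA2 (by linarith) (by positivity) (by positivity)
    have h6 : (u0 ^ 2 + u1 ^ 2) * (p0 ^ 2 + p1 ^ 2) ≤ (u0 ^ 2 + u1 ^ 2) * M ^ 2 :=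
      mul_le_mul_of_nonneg_left hpM hn0.le
    have h7 : (u0 ^ 2 + u1 ^ 2) * M ^ 2 ≤ (u0 ^ 2 + u1 ^ 2) * (κ ^ 2 * m ^ 2) :=
      mul_le_mul_of_nonneg_left hM2 hn0.le
    nlinarith [hLag, h5, h6, h7]
  have habs : |(u0 * p1 - u1 * p0) * (u0 * v1 - u1 * v0)|
      ≤ (u0 * p0 + u1 * p1) * (u0 * v0 + u1 * v1) := by
    have hABnn : 0 ≤ (u0 * p0 + u1 * p1) * (u0 * v0 + u1 * v1) := mul_nonneg hA0.le hB0
    rw [← Real.sqrt_sq hABnn, ← Real.sqrt_sq_eq_abs]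
    apply Real.sqrt_le_sqrt
    calc ((u0 * p1 - u1 * p0) * (u0 * v1 - u1 * v0)) ^ 2
        = (u0 * p1 - u1 * p0) ^ 2 * (u0 * v1 - u1 * v0) ^ 2 := by ring
      _ = (u0 * p1 - u1 * p0) ^ 2 := by rw [hdet, mul_one]
      _ ≤ (u0 * p0 + u1 * p1) ^ 2 * (u0 * v0 + u1 * v1) ^ 2 := hD2
      _ = ((u0 * p0 + u1 * p1) * (u0 * v0 + u1 * v1)) ^ 2 := by ring
  have hfinal : 0 ≤ (u0 * p0 + u1 * p1) * (u0 * v0 + u1 * v1)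
      + (u0 * p1 - u1 * p0) * (u0 * v1 - u1 * v0) := by
    have := neg_abs_le ((u0 * p1 - u1 * p0) * (u0 * v1 - u1 * v0))
    linarith
  have hid : (u0 ^ 2 + u1 ^ 2) * (v0 * p0 + v1 * p1)
      = (u0 * p0 + u1 * p1) * (u0 * v0 + u1 * v1)
      + (u0 * p1 - u1 * p0) * (u0 * v1 - u1 * v0) := by ring
  have h8 : 0 ≤ ((u0 ^ 2 + u1 ^ 2) * (v0 * p0 + v1 * p1)) / (u0 ^ 2 + u1 ^ 2) := by
    rw [hid]; exact div_nonneg hfinal hn0.le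
  rwa [mul_div_cancel_left₀ _ hn0.ne'] at h8

lemma aux_subadd {F : E2 → ℝ} (hF : IsAsymNorm F) (x y : E2) : F (x + y) ≤ F x + F y := by
  obtain ⟨hconv, hhom, -, -⟩ := hF
  have h1 : F ((1/2 : ℝ) • x + (1/2 : ℝ) • y) ≤ (1/2) * F x + (1/2) * F y :=
    hconv.2 (Set.mem_univ x) (Set.mem_univ y) (by norm_num) (by norm_num) (by norm_num)
  have h3 : (2:ℝ) • ((1/2:ℝ) • x + (1/2:ℝ) • y) = x + y := by
    rw [smul_add, smul_smul, smul_smul]; norm_num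
  have h2 : F (x + y) = 2 * F ((1/2:ℝ) • x + (1/2:ℝ) • y) := by
    rw [← h3, hhom 2 (by norm_num)]
  linarith

lemma aux_key_half (F : E2 → ℝ) (hF : IsAsymNorm F) (u v : E2)
    (hdet : |det2 u v| = 1) (hs : Real.sqrt (kappa F ^ 2 - 1) ≤ ⟪u, v⟫) :
    ∀ δ : ℝ, 0 ≤ δ → F u ≤ F (u + δ • v) := by
  have hsub := aux_subadd hF
  obtain ⟨hconv, hhom, hnn, hpos⟩ := hF
  -- max and min of F on the unit sphere
  have hcont : ContinuousOn F (Metric.sphere (0:E2) 1) :=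
    (hconv.continuousOn isOpen_univ).mono (Set.subset_univ _)
  have hsph : (Metric.sphere (0:E2) 1).Nonempty := NormedSpace.sphere_nonempty.2 zero_le_one
  obtain ⟨a, ha, hamax⟩ := (isCompact_sphere (0:E2) 1).exists_isMaxOn hsph hcont
  obtain ⟨b, hb, hbmin⟩ := (isCompact_sphere (0:E2) 1).exists_isMinOn hsph hcont
  have ha1 : ‖a‖ = 1 := mem_sphere_zero_iff_norm.mp ha
  have hb1 : ‖b‖ = 1 := mem_sphere_zero_iff_norm.mp hb
  set M := F a with hMdef
  set m := F b with hmdef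
  have hm0 : 0 < m := hpos b (by intro h; rw [h] at hb1; simp at hb1)
  have hMm : m ≤ M := hbmin ha
  have hM0 : 0 < M := lt_of_lt_of_le hm0 hMm
  -- comparison with the Euclidean norm
  have hbounds : ∀ w : E2, m * ‖w‖ ≤ F w ∧ F w ≤ M * ‖w‖ := by
    intro w
    rcases eq_or_ne w 0 with rfl | hw
    · have : F (0:E2) = 0 := by
        have := hhom 0 le_rfl 0; simpa using this
      simp [this]
    · have hr : 0 < ‖w‖ := norm_pos_iff.2 hw
      have hunit : ‖(‖w‖⁻¹ • w)‖ = 1 := by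
        rw [norm_smul, norm_inv, norm_norm, inv_mul_cancel₀ hr.ne']
      have hFw : F w = ‖w‖ * F (‖w‖⁻¹ • w) := by
        rw [← hhom ‖w‖ hr.le, smul_smul, mul_inv_cancel₀ hr.ne', one_smul]
      have h1 : F (‖w‖⁻¹ • w) ≤ M := hamax (mem_sphere_zero_iff_norm.mpr hunit)
      have h2 : m ≤ F (‖w‖⁻¹ • w) := hbmin (mem_sphere_zero_iff_norm.mpr hunit)
      constructor <;> rw [hFw] <;> nlinarith
  -- kappa is at least M / m
  have hbdd : BddAbove {r : ℝ | ∃ x y : E2, ‖x‖ = 1 ∧ ‖y‖ = 1 ∧ r = F x / F y} := by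
    refine ⟨M / m, ?_⟩
    rintro r ⟨x, y, hx, hy, rfl⟩
    have hFy : m ≤ F y := by have := (hbounds y).1; rwa [hy, mul_one] at this
    have hFx : F x ≤ M := by have := (hbounds x).2; rwa [hx, mul_one] at this
    exact div_le_div₀ hM0.le hFx hm0 hFy
  have hκ : M / m ≤ kappa F := le_csSup hbdd ⟨a, b, ha1, hb1, rfl⟩
  have hMκ : M ≤ kappa F * m := (div_le_iff₀ hm0).1 hκ
  clear hκ hbdd hamax hbmin ha hb ha1 hb1 hcont hsph
  -- u is nonzero
  have hu0 : u ≠ 0 := by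
    intro h; rw [h] at hdet; simp [det2] at hdet
  -- supporting functional at u, via Hahn-Banach
  have hdom : ∀ x : (LinearPMap.mkSpanSingleton (K := ℝ) (σ := RingHom.id ℝ) u (F u) hu0).domain,
      (LinearPMap.mkSpanSingleton (K := ℝ) (σ := RingHom.id ℝ) u (F u) hu0) x ≤ F x := by
    rintro ⟨x, hx⟩
    obtain ⟨c, rfl⟩ := Submodule.mem_span_singleton.1 hx
    have happ : LinearPMap.mkSpanSingleton (σ := RingHom.id ℝ) u (F u) hu0 ⟨c • u, hx⟩ = c • F u :=
      LinearPMap.mkSpanSingleton'_apply _ _ _ c hx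
    rw [happ, smul_eq_mul]
    rcases le_or_gt 0 c with hc | hc
    · rw [hhom c hc]
    · have : c * F u ≤ 0 := mul_nonpos_of_nonpos_of_nonneg hc.le (hnn u)
      exact this.trans (hnn _)
  obtain ⟨g, hg1, hg2⟩ := exists_extension_of_le_sublinear
      (LinearPMap.mkSpanSingleton (σ := RingHom.id ℝ) u (F u) hu0) F
      (fun c hc x => hhom c hc.le x) hsub hdom
  have hgu : g u = F u := by
    have := hg1 ⟨u, Submodule.mem_span_singleton_self u⟩
    rwa [LinearPMap.mkSpanSingleton_apply] at this
  clear hg1 hdom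
  -- coordinates of g
  set p0 := g (EuclideanSpace.single (0:Fin 2) (1:ℝ)) with hp0
  set p1 := g (EuclideanSpace.single (1:Fin 2) (1:ℝ)) with hp1
  have hgw : ∀ w : E2, g w = w 0 * p0 + w 1 * p1 := by
    intro w
    have hw : w = w 0 • EuclideanSpace.single (0:Fin 2) (1:ℝ)
        + w 1 • EuclideanSpace.single (1:Fin 2) (1:ℝ) := by
      ext i; fin_cases i <;> simp [EuclideanSpace.single_apply]
    calc g w = g (w 0 • EuclideanSpace.single (0:Fin 2) (1:ℝ)
        + w 1 • EuclideanSpace.single (1:Fin 2) (1:ℝ)) := by rw [← hw]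
      _ = w 0 * p0 + w 1 * p1 := by
          rw [map_add, LinearMap.map_smul, LinearMap.map_smul, smul_eq_mul, smul_eq_mul]
  have hnorm2 : ∀ w : E2, ‖w‖ = Real.sqrt (w 0 ^2 + w 1 ^2) := by
    intro w; simp [EuclideanSpace.norm_eq, Fin.sum_univ_two, Real.norm_eq_abs, sq_abs]
  -- bound on the coordinates of g
  have hpM : p0 ^ 2 + p1 ^ 2 ≤ M ^ 2 := by
    refine aux_sqrt_bound _ _ (by positivity) ?_
    have h1 : g (mk2 p0 p1) = p0 ^ 2 + p1 ^ 2 := by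
      rw [hgw]
      show p0 * p0 + p1 * p1 = p0 ^ 2 + p1 ^ 2
      ring
    have hnq : ‖mk2 p0 p1‖ = Real.sqrt (p0 ^ 2 + p1 ^ 2) := by
      rw [hnorm2]; rfl
    have h2 := (hg2 (mk2 p0 p1)).trans (hbounds (mk2 p0 p1)).2
    rw [h1, hnq] at h2
    exact h2
  -- key positivity: g v ≥ 0
  have hinner : (⟪u, v⟫ : ℝ) = u 0 * v 0 + u 1 * v 1 := by
    simp [PiLp.inner_apply, Fin.sum_univ_two, RCLike.inner_apply, conj_trivial]; ring
  rw [hinner] at hs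
  have hdet2 : (u 0 * v 1 - u 1 * v 0) ^ 2 = 1 := by
    have : |u 0 * v 1 - u 1 * v 0| = 1 := hdet
    rw [← sq_abs, this, one_pow]
  have hAm : m * Real.sqrt (u 0 ^ 2 + u 1 ^ 2) ≤ u 0 * p0 + u 1 * p1 := by
    have h1 := (hbounds u).1
    rw [hnorm2 u] at h1
    rw [← hgu, hgw u] at h1
    exact h1
  have hgv0 : 0 ≤ g v := by
    rw [hgw v]
    exact aux_alg_main m M (kappa F) p0 p1 (u 0) (u 1) (v 0) (v 1)
      hm0 hMm hMκ hdet2 hs hpM hAm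
  -- conclude
  intro δ hδ
  calc F u ≤ F u + δ * g v := le_add_of_nonneg_right (mul_nonneg hδ hgv0)
    _ = g (u + δ • v) := by rw [map_add, LinearMap.map_smul, hgu, smul_eq_mul]
    _ ≤ F (u + δ • v) := hg2 _

/-- if `u, v ∈ ℤ²` satisfy `|det(u,v)| = 1` and `⟨u,v⟩ ≥ √(κ(F)² − 1)`,
then `u` and `v` form an `F`-acute angle. -/
theorem stmt7 (F : E2 → ℝ) (hF : IsAsymNorm F) (u v : E2)
    (hu : IsIntVec u) (hv : IsIntVec v) (hdet : |det2 u v| = 1)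
    (hs : Real.sqrt (kappa F ^ 2 - 1) ≤ ⟪u, v⟫) :
    IsAcute F u v := by
  have hdet' : |det2 v u| = 1 := by
    have : det2 v u = -det2 u v := by simp [det2]; ring
    rw [this, abs_neg, hdet]
  have hs' : Real.sqrt (kappa F ^ 2 - 1) ≤ ⟪v, u⟫ := by
    rwa [real_inner_comm]
  intro δ hδ
  exact ⟨aux_key_half F hF u v hdet hs δ hδ, aux_key_half F hF v u hdet' hs' δ hδ⟩
end
end

section
/- Let M be a 2×2 symmetric positive definite matrix, let F(w) := √⟨w, M w⟩, and let λ be the smallest eigenvalue of M. Let u, v ∈ ℤ² satisfy |det(u,v)| = 1 and ⟨u,v⟩ ≥ 0, and suppose u and v do NOT form an F-acute angle. Then there exists t ∈ (0,1) such that t·u + (1−t)·v is an eigenvector of M associated with the eigenvalue λ. -/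
open scoped RealInnerProductSpace
open MeasureTheory Real

noncomputable section

lemma inner_E2 (x y : E2) : ⟪x, y⟫ = x 0 * y 0 + x 1 * y 1 := by
  simp [PiLp.inner_apply, RCLike.inner_apply, Fin.sum_univ_two]
  ring

lemma mulVec_E2 (M : Matrix (Fin 2) (Fin 2) ℝ) (w : Fin 2 → ℝ) (i : Fin 2) :
    M.mulVec w i = M i 0 * w 0 + M i 1 * w 1 := by
  simp [Matrix.mulVec, dotProduct, Fin.sum_univ_two]

set_option maxHeartbeats 1600000 in
/-- if the non-zero vertices `u, v` of an elementary triangle do not form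
an `F`-acute angle, for `F(w) = √⟨w, M w⟩`, then the triangle contains an eigenvector
for the smallest eigenvalue `λ` of `M` in its interior. -/
theorem stmt9 (M : Matrix (Fin 2) (Fin 2) ℝ) (hMsymm : M.IsSymm) (hM : M.PosDef)
    (F : E2 → ℝ) (hF : ∀ w : E2, F w = Real.sqrt ⟪w, (WithLp.toLp 2 (M.mulVec w) : E2)⟫)
    (lam : ℝ) (hlam : Module.End.HasEigenvalue M.mulVecLin lam)
    (hlam_min : ∀ μ : ℝ, Module.End.HasEigenvalue M.mulVecLin μ → lam ≤ μ)
    (u v : E2) (hu : IsIntVec u) (hv : IsIntVec v)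
    (hdet : |det2 u v| = 1) (hs : 0 ≤ ⟪u, v⟫)
    (hnot : ¬ IsAcute F u v) :
    ∃ t : ℝ, t ∈ Set.Ioo (0:ℝ) 1 ∧ (t • u + (1 - t) • v) ≠ 0 ∧
      M.mulVec (t • u + (1 - t) • v) = lam • ((t • u + (1 - t) • v : E2) : Fin 2 → ℝ) := by
  classical
  have hq' : M 1 0 = M 0 1 := hMsymm.apply 0 1
  -- eigenvector e for lam
  obtain ⟨e, he⟩ := hlam.exists_hasEigenvector
  have he0 : e ≠ 0 := he.2
  have heM : M.mulVec e = lam • e := by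
    have h := he.apply_eq_smul
    rwa [Matrix.mulVecLin_apply] at h
  obtain ⟨p, hp⟩ : ∃ p, p = M 0 0 := ⟨_, rfl⟩
  obtain ⟨q, hqd⟩ : ∃ q, q = M 0 1 := ⟨_, rfl⟩
  obtain ⟨r, hr⟩ : ∃ r, r = M 1 1 := ⟨_, rfl⟩
  obtain ⟨x, hx⟩ : ∃ x, x = e 0 := ⟨_, rfl⟩
  obtain ⟨y, hy⟩ : ∃ y, y = e 1 := ⟨_, rfl⟩
  have H1 : p * x + q * y = lam * x := by
    have h := congrFun heM 0
    rw [mulVec_E2] at h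
    rw [hp, hqd, hx, hy]
    simpa using h
  have H2 : q * x + r * y = lam * y := by
    have h := congrFun heM 1
    rw [mulVec_E2, hq'] at h
    rw [hqd, hr, hx, hy]
    simpa using h
  have hexy : x ≠ 0 ∨ y ≠ 0 := by
    by_contra hcon
    push_neg at hcon
    apply he0
    have h0 : e 0 = 0 := by rw [← hx]; exact hcon.1
    have h1 : e 1 = 0 := by rw [← hy]; exact hcon.2
    funext i
    fin_cases i
    · exact h0
    · exact h1
  have hn : 0 < x ^ 2 + y ^ 2 := by
    rcases hexy with h | h <;> positivity
  have hlam_pos : 0 < lam := by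
    have h := hM.dotProduct_mulVec_pos he0
    have hd : dotProduct (star e) (M.mulVec e) = lam * (x ^ 2 + y ^ 2) := by
      rw [heM, hx, hy]
      simp [dotProduct, Fin.sum_univ_two]
      ring
    rw [hd] at h
    nlinarith [hn]
  -- the perpendicular vector is an eigenvector for μ = p + r - lam
  obtain ⟨μ, hμ⟩ : ∃ μ, μ = p + r - lam := ⟨_, rfl⟩
  have hfM : M.mulVec ![-y, x] = μ • ![-y, x] := by
    funext i
    fin_cases i
    · show M.mulVec ![-y, x] 0 = μ * (-y)
      rw [mulVec_E2, ← hp, ← hqd]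
      show p * (-y) + q * x = μ * (-y)
      rw [hμ]; linarith [H2]
    · show M.mulVec ![-y, x] 1 = μ * x
      rw [mulVec_E2, hq', ← hqd, ← hr]
      show q * (-y) + r * x = μ * x
      rw [hμ]; linarith [H1]
  have hf0 : (![-y, x] : Fin 2 → ℝ) ≠ 0 := by
    intro h
    rcases hexy with hcc | hcc
    · exact hcc (by simpa using congrFun h 1)
    · exact hcc (by have h0 := congrFun h 0; simp at h0; simpa using h0)
  have hle : lam ≤ μ := by
    apply hlam_min
    apply Module.End.hasEigenvalue_of_hasEigenvector (x := ![-y, x])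
    refine ⟨Module.End.mem_eigenspace_iff.mpr ?_, hf0⟩
    rw [Matrix.mulVecLin_apply]
    exact hfM
  obtain ⟨a, ha⟩ : ∃ a, a = u 0 := ⟨_, rfl⟩
  obtain ⟨b, hb⟩ : ∃ b, b = u 1 := ⟨_, rfl⟩
  obtain ⟨c, hc⟩ : ∃ c, c = v 0 := ⟨_, rfl⟩
  obtain ⟨d, hd⟩ : ∃ d, d = v 1 := ⟨_, rfl⟩
  have hsc : 0 ≤ a * c + b * d := by
    rw [inner_E2] at hs
    rw [ha, hb, hc, hd]
    exact hs
  have hQv : 0 ≤ c * (p * c + q * d) + d * (q * c + r * d) := by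
    have h := hM.posSemidef.dotProduct_mulVec_nonneg v.ofLp
    have hdd : dotProduct (star v.ofLp) (M.mulVec v.ofLp) =
        c * (p * c + q * d) + d * (q * c + r * d) := by
      rw [hp, hqd, hr, hc, hd]
      simp [dotProduct, Fin.sum_univ_two, mulVec_E2, hq']
      all_goals ring
    rwa [hdd] at h
  have hQu : 0 ≤ a * (p * a + q * b) + b * (q * a + r * b) := by
    have h := hM.posSemidef.dotProduct_mulVec_nonneg u.ofLp
    have hdd : dotProduct (star u.ofLp) (M.mulVec u.ofLp) =
        a * (p * a + q * b) + b * (q * a + r * b) := by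
      rw [hp, hqd, hr, ha, hb]
      simp [dotProduct, Fin.sum_univ_two, mulVec_E2, hq']
      all_goals ring
    rwa [hdd] at h
  have quad_eq : ∀ w : E2, ⟪w, (WithLp.toLp 2 (M.mulVec w) : E2)⟫ =
      w 0 * (p * w 0 + q * w 1) + w 1 * (q * w 0 + r * w 1) := by
    intro w
    rw [inner_E2]
    have h0 : (WithLp.toLp 2 (M.mulVec w) : E2) 0 = p * w 0 + q * w 1 := by
      rw [hp, hqd]; exact mulVec_E2 M w 0
    have h1 : (WithLp.toLp 2 (M.mulVec w) : E2) 1 = q * w 0 + r * w 1 := by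
      rw [hqd, hr, ← hq']; exact mulVec_E2 M w 1
    rw [h0, h1]
  have hnegc : a * (p * c + q * d) + b * (q * c + r * d) < 0 := by
    by_contra hge
    push_neg at hge
    apply hnot
    intro δ hδ
    constructor
    · rw [hF, hF]
      apply Real.sqrt_le_sqrt
      rw [quad_eq, quad_eq]
      have e0 : (u + δ • v) 0 = a + δ * c := by
        rw [ha, hc]
        simp [PiLp.add_apply, PiLp.smul_apply, smul_eq_mul]
      have e1 : (u + δ • v) 1 = b + δ * d := by
        rw [hb, hd]
        simp [PiLp.add_apply, PiLp.smul_apply, smul_eq_mul]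
      rw [e0, e1, ← ha, ← hb]
      nlinarith [mul_nonneg hδ hge, mul_nonneg (mul_nonneg hδ hδ) hQv]
    · rw [hF, hF]
      apply Real.sqrt_le_sqrt
      rw [quad_eq, quad_eq]
      have e0 : (v + δ • u) 0 = c + δ * a := by
        rw [ha, hc]
        simp [PiLp.add_apply, PiLp.smul_apply, smul_eq_mul]
      have e1 : (v + δ • u) 1 = d + δ * b := by
        rw [hb, hd]
        simp [PiLp.add_apply, PiLp.smul_apply, smul_eq_mul]
      rw [e0, e1, ← hc, ← hd]
      nlinarith [mul_nonneg hδ hge, mul_nonneg (mul_nonneg hδ hδ) hQu]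
  -- decomposition in the eigenbasis
  obtain ⟨αu, hαu⟩ : ∃ z, z = a * x + b * y := ⟨_, rfl⟩
  obtain ⟨βu, hβu⟩ : ∃ z, z = b * x - a * y := ⟨_, rfl⟩
  obtain ⟨αv, hαv⟩ : ∃ z, z = c * x + d * y := ⟨_, rfl⟩
  obtain ⟨βv, hβv⟩ : ∃ z, z = d * x - c * y := ⟨_, rfl⟩
  have key : (x ^ 2 + y ^ 2) * (lam * (αu * αv) + μ * (βu * βv)) =
      (x ^ 2 + y ^ 2) ^ 2 * (a * (p * c + q * d) + b * (q * c + r * d)) := by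
    rw [hαu, hβu, hαv, hβv, hμ]
    linear_combination
      (-((a * x + b * y) * (c * x + d * y) * x -
          ((a * x + b * y) * (d * x - c * y) + (b * x - a * y) * (c * x + d * y)) * y -
          (b * x - a * y) * (d * x - c * y) * x)) * H1 +
      (-((a * x + b * y) * (c * x + d * y) * y +
          ((a * x + b * y) * (d * x - c * y) + (b * x - a * y) * (c * x + d * y)) * x -
          (b * x - a * y) * (d * x - c * y) * y)) * H2
  have hkey2 : lam * (αu * αv) + μ * (βu * βv) < 0 := by
    have hscaled : (x ^ 2 + y ^ 2) ^ 2 * (a * (p * c + q * d) + b * (q * c + r * d)) < 0 :=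
      mul_neg_of_pos_of_neg (by positivity) hnegc
    have h' : (x ^ 2 + y ^ 2) * (lam * (αu * αv) + μ * (βu * βv)) < 0 := by
      rw [key]; exact hscaled
    by_contra hXX
    push_neg at hXX
    exact absurd h' (not_lt.mpr (mul_nonneg hn.le hXX))
  have hsum : αu * αv + βu * βv = (x ^ 2 + y ^ 2) * (a * c + b * d) := by
    rw [hαu, hβu, hαv, hβv]; ring
  have hββ : βu * βv < 0 := by
    by_contra h
    push_neg at h
    have h1 : 0 ≤ (μ - lam) * (βu * βv) := mul_nonneg (by linarith) h
    have h2 : 0 ≤ lam * ((x ^ 2 + y ^ 2) * (a * c + b * d)) :=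
      mul_nonneg hlam_pos.le (mul_nonneg hn.le hsc)
    have h3 : lam * (αu * αv + βu * βv) = lam * ((x ^ 2 + y ^ 2) * (a * c + b * d)) := by
      rw [hsum]
    linarith [h1, h2, h3, hkey2]
  have hden : βv - βu ≠ 0 := by
    intro h
    have hvb : βv = βu := by linarith
    rw [hvb] at hββ
    nlinarith [sq_nonneg βu]
  obtain ⟨t, ht⟩ : ∃ t : ℝ, t = βv / (βv - βu) := ⟨_, rfl⟩
  have h01 : 0 < t ∧ t < 1 := by
    rcases lt_or_gt_of_ne (fun h => by rw [h] at hββ; simp at hββ : βv ≠ 0) with hv' | hv'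
    · -- βv < 0, so βu > 0
      have hu' : 0 < βu := by nlinarith
      have hdn : βv - βu < 0 := by linarith
      constructor
      · rw [ht]
        exact div_pos_iff.mpr (Or.inr ⟨hv', hdn⟩)
      · have ht1 : t - 1 = βu / (βv - βu) := by
          rw [ht, div_sub_one hden]; ring_nf
        have hneg : βu / (βv - βu) < 0 := div_neg_of_pos_of_neg hu' hdn
        linarith [ht1 ▸ hneg]
    · -- βv > 0, so βu < 0
      have hu' : βu < 0 := by nlinarith
      have hdn : 0 < βv - βu := by linarith
      constructor
      · rw [ht]
        exact div_pos hv' hdn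
      · have ht1 : t - 1 = βu / (βv - βu) := by
          rw [ht, div_sub_one hden]; ring_nf
        have hneg : βu / (βv - βu) < 0 := div_neg_of_neg_of_pos hu' hdn
        linarith [ht1 ▸ hneg]
  have hβt : t * βu + (1 - t) * βv = 0 := by
    have hc' : t * (βv - βu) = βv := by
      rw [ht]; exact div_mul_cancel₀ βv hden
    linear_combination (-1 : ℝ) * hc'
  obtain ⟨w0, hw0⟩ : ∃ z, z = t * a + (1 - t) * c := ⟨_, rfl⟩
  obtain ⟨w1, hw1⟩ : ∃ z, z = t * b + (1 - t) * d := ⟨_, rfl⟩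
  have hcomp0 : (t • u + (1 - t) • v : E2) 0 = w0 := by
    rw [hw0, ha, hc]
    simp [PiLp.add_apply, PiLp.smul_apply, smul_eq_mul]
  have hcomp1 : (t • u + (1 - t) • v : E2) 1 = w1 := by
    rw [hw1, hb, hd]
    simp [PiLp.add_apply, PiLp.smul_apply, smul_eq_mul]
  have hbw : w1 * x - w0 * y = 0 := by
    rw [hw0, hw1]
    linear_combination hβt - t * hβu - (1 - t) * hβv
  have hdet0 : a * d - b * c ≠ 0 := by
    intro h
    have hz : det2 u v = 0 := by
      rw [det2, ← ha, ← hb, ← hc, ← hd]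
      linarith
    rw [hz] at hdet
    simp at hdet
  have hwne : ¬ (w0 = 0 ∧ w1 = 0) := by
    rintro ⟨h0, h1⟩
    have hz : t * (a * d - b * c) = 0 := by
      rw [hw0] at h0; rw [hw1] at h1
      linear_combination d * h0 - c * h1
    rcases mul_eq_zero.mp hz with h | h
    · exact absurd h (ne_of_gt h01.1)
    · exact hdet0 h
  have heig0 : p * w0 + q * w1 = lam * w0 := by
    apply mul_left_cancel₀ (ne_of_gt hn)
    linear_combination (w0 * x + w1 * y) * H1 + (-p * y + q * x + lam * y) * hbw
  have heig1 : q * w0 + r * w1 = lam * w1 := by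
    apply mul_left_cancel₀ (ne_of_gt hn)
    linear_combination (w0 * x + w1 * y) * H2 + (-q * y + (r - lam) * x) * hbw
  refine ⟨t, ⟨h01.1, h01.2⟩, ?_, ?_⟩
  · intro h
    apply hwne
    constructor
    · rw [← hcomp0, h]; rfl
    · rw [← hcomp1, h]; rfl
  · funext i
    fin_cases i
    · show M.mulVec (t • u + (1 - t) • v : E2) 0 = lam * (t • u + (1 - t) • v : E2) 0
      rw [mulVec_E2, ← hp, ← hqd]
      show p * (t • u + (1 - t) • v : E2) 0 + q * (t • u + (1 - t) • v : E2) 1 =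
        lam * (t • u + (1 - t) • v : E2) 0
      rw [hcomp0, hcomp1]
      exact heig0
    · show M.mulVec (t • u + (1 - t) • v : E2) 1 = lam * (t • u + (1 - t) • v : E2) 1
      rw [mulVec_E2, hq', ← hqd, ← hr]
      show q * (t • u + (1 - t) • v : E2) 0 + r * (t • u + (1 - t) • v : E2) 1 =
        lam * (t • u + (1 - t) • v : E2) 1
      rw [hcomp0, hcomp1]
      exact heig1
end
end

section
/- Let F, F₁, …, F_r be asymmetric norms on ℝ² that are C¹ on ℝ² ∖ {0}, and assume that everywhere on ℝ, min{φ_{F₁}, …, φ_{F_r}} ≤ φ_F ≤ max{φ_{F₁}, …, φ_{F_r}}. Then for any u, v ∈ ℝ² ∖ {0}: if u and v form an F_i-acute angle for every 1 ≤ i ≤ r, then u and v form an F-acute angle. -/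
open scoped RealInnerProductSpace
open MeasureTheory Real

noncomputable section

lemma diffAt {F : E2 → ℝ} (hC1 : ContDiffOn ℝ 1 F {(0:E2)}ᶜ) {x : E2} (hx : x ≠ 0) :
    DifferentiableAt ℝ F x :=
  (hC1.differentiableOn one_ne_zero).differentiableAt
    (isOpen_compl_singleton.mem_nhds (by simpa using hx))

lemma myLineDeriv {F : E2 → ℝ} (hC1 : ContDiffOn ℝ 1 F {(0:E2)}ᶜ) {u : E2} (hu : u ≠ 0) (v : E2) :
    HasDerivAt (fun t : ℝ => F (u + t • v)) (fderiv ℝ F u v) 0 := by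
  have hcurve : HasDerivAt (fun t : ℝ => u + t • v) v 0 :=
    (((hasDerivAt_id (0:ℝ)).smul_const v).const_add u).congr_deriv (by simp)
  have hd := (diffAt hC1 hu).hasFDerivAt
  have hd' : HasFDerivAt F (fderiv ℝ F u) (u + (0:ℝ) • v) := by simpa using hd
  exact hd'.comp_hasDerivAt (0:ℝ) hcurve

lemma lineConvex {F : E2 → ℝ} (hF : ConvexOn ℝ Set.univ F) (u v : E2) :
    ConvexOn ℝ Set.univ (fun t : ℝ => F (u + t • v)) := by
  have := hF.comp_affineMap (AffineMap.lineMap u (u + v))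
  have he : (fun t : ℝ => F (u + t • v)) = F ∘ (AffineMap.lineMap u (u + v)) := by
    funext t
    simp [AffineMap.lineMap_apply]
    congr 1
    abel
  rw [he]
  simpa using this

lemma deriv_nonneg_of_min {F : E2 → ℝ} (hC1 : ContDiffOn ℝ 1 F {(0:E2)}ᶜ) {u : E2} (hu : u ≠ 0)
    (v : E2) (h : ∀ δ : ℝ, 0 ≤ δ → F u ≤ F (u + δ • v)) : 0 ≤ fderiv ℝ F u v := by
  have hd := myLineDeriv hC1 hu v
  have ht : Filter.Tendsto (slope (fun t : ℝ => F (u + t • v)) 0) (nhdsWithin 0 (Set.Ioi 0))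
      (nhds (fderiv ℝ F u v)) :=
    (hasDerivAt_iff_tendsto_slope.mp hd).mono_left
      (nhdsWithin_mono _ (fun t ht => ne_of_gt ht))
  refine ge_of_tendsto ht ?_
  filter_upwards [self_mem_nhdsWithin] with t (ht : 0 < t)
  rw [slope_def_field]
  have := h t ht.le
  have h0 : F (u + (0:ℝ) • v) = F u := by simp
  apply div_nonneg (by simpa using sub_nonneg.mpr (h t ht.le)) (by linarith)

lemma min_of_deriv_nonneg {F : E2 → ℝ} (hFc : ConvexOn ℝ Set.univ F)
    (hC1 : ContDiffOn ℝ 1 F {(0:E2)}ᶜ) {u : E2} (hu : u ≠ 0)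
    (v : E2) (h : 0 ≤ fderiv ℝ F u v) : ∀ δ : ℝ, 0 ≤ δ → F u ≤ F (u + δ • v) := by
  intro δ hδ
  rcases eq_or_lt_of_le hδ with rfl | hδ
  · simp
  have hd := myLineDeriv hC1 hu v
  have := (lineConvex hFc u v).le_slope_of_hasDerivAt (Set.mem_univ 0) (Set.mem_univ δ) hδ hd
  rw [slope_def_field] at this
  have h0 : F (u + (0:ℝ) • v) = F u := by simp
  rw [h0] at this
  have := le_trans h this
  have hpos : 0 ≤ F (u + δ • v) - F u := by
    by_contra hneg
    push_neg at hneg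
    nlinarith [div_neg_of_neg_of_pos (by linarith : F (u + δ • v) - F u < 0) (by linarith : (0:ℝ) < δ - 0)]
  linarith

lemma euler_id {F : E2 → ℝ} (hhom : ∀ (c : ℝ), 0 ≤ c → ∀ u : E2, F (c • u) = c * F u)
    (hC1 : ContDiffOn ℝ 1 F {(0:E2)}ᶜ) {u : E2} (hu : u ≠ 0) : fderiv ℝ F u u = F u := by
  have hd : HasDerivAt (fun t : ℝ => F (t • u)) (fderiv ℝ F u u) 1 := by
    have hcurve : HasDerivAt (fun t : ℝ => t • u) u 1 := by
      simpa using (hasDerivAt_id (1:ℝ)).smul_const u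
    have hfd : HasFDerivAt F (fderiv ℝ F u) ((1:ℝ) • u) := by
      simpa using (diffAt hC1 hu).hasFDerivAt
    exact hfd.comp_hasDerivAt (1:ℝ) hcurve
  have hd2 : HasDerivAt (fun t : ℝ => F (t • u)) (F u) 1 := by
    have : HasDerivAt (fun t : ℝ => t * F u) (F u) 1 := by
      simpa using (hasDerivAt_id (1:ℝ)).mul_const (F u)
    refine this.congr_of_eventuallyEq ?_
    filter_upwards [eventually_gt_nhds (by norm_num : (0:ℝ) < 1)] with t (ht : 0 < t)
    rw [hhom t ht.le]
  exact hd.unique hd2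

lemma fderiv_homog {F : E2 → ℝ} (hhom : ∀ (c : ℝ), 0 ≤ c → ∀ u : E2, F (c • u) = c * F u)
    (hC1 : ContDiffOn ℝ 1 F {(0:E2)}ᶜ) {u : E2} (hu : u ≠ 0) {c : ℝ} (hc : 0 < c) :
    fderiv ℝ F (c • u) = fderiv ℝ F u := by
  have hcu : c • u ≠ 0 := smul_ne_zero hc.ne' hu
  have h1 : ∀ x : E2, F (c • x) = c * F x := fun x => hhom c hc.le x
  have hcomp : (fun x : E2 => F (c • x)) = fun x => c * F x := funext h1
  have hd1 : HasFDerivAt (fun x : E2 => F (c • x))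
      ((fderiv ℝ F (c • u)).comp (c • ContinuousLinearMap.id ℝ E2)) u := by
    have hfd : HasFDerivAt F (fderiv ℝ F (c • u)) (c • u) := (diffAt hC1 hcu).hasFDerivAt
    have hlin : HasFDerivAt (fun x : E2 => c • x) (c • ContinuousLinearMap.id ℝ E2) u := by
      exact (hasFDerivAt_id u).const_smul c
    exact hfd.comp u hlin
  have hd2 : HasFDerivAt (fun x : E2 => c * F x) (c • fderiv ℝ F u) u :=
    (diffAt hC1 hu).hasFDerivAt.const_smul c
  rw [hcomp] at hd1
  have heq := hd1.unique hd2
  ext y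
  have := congrFun (congrArg DFunLike.coe heq) y
  simp at this
  rcases this with h | h
  · exact h
  · exact absurd h hc.ne'


lemma grad_inner (F : E2 → ℝ) (x y : E2) : ⟪gradient F x, y⟫ = fderiv ℝ F x y := by
  simp [gradient, InnerProductSpace.toDual_symm_apply]

lemma eTheta0 (θ : ℝ) : eTheta θ 0 = Real.cos θ := by simp [eTheta, mk2]
lemma eTheta1 (θ : ℝ) : eTheta θ 1 = Real.sin θ := by simp [eTheta, mk2]

lemma eTheta_ne_zero (θ : ℝ) : eTheta θ ≠ 0 := by
  intro h
  have h0 : Real.cos θ = 0 := by simpa [eTheta0] using congrArg (fun w : E2 => w 0) h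
  have h1 : Real.sin θ = 0 := by simpa [eTheta1] using congrArg (fun w : E2 => w 1) h
  nlinarith [Real.sin_sq_add_cos_sq θ]

lemma exists_theta {u : E2} (hu : u ≠ 0) : ∃ θ : ℝ, eTheta θ = ‖u‖⁻¹ • u := by
  set w : E2 := ‖u‖⁻¹ • u with hw
  have hnu : ‖u‖ ≠ 0 := norm_ne_zero_iff.mpr hu
  have hnw : ‖w‖ = 1 := by
    rw [hw, norm_smul]
    simp [abs_of_nonneg (inv_nonneg.mpr (norm_nonneg u)), inv_mul_cancel₀ hnu]
  have hsum : (w 0)^2 + (w 1)^2 = 1 := by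
    have := hnw
    rw [EuclideanSpace.norm_eq] at this
    have h2 : Real.sqrt ((w 0)^2 + (w 1)^2) = 1 := by
      simpa [Fin.sum_univ_two, sq_abs] using this
    nlinarith [Real.sq_sqrt (by positivity : (0:ℝ) ≤ (w 0)^2 + (w 1)^2)]
  set z : ℂ := ⟨w 0, w 1⟩ with hz
  have habs : ‖z‖ = 1 := by
    rw [Complex.norm_def, Complex.normSq_mk]
    rw [show w 0 * w 0 + w 1 * w 1 = (w 0)^2 + (w 1)^2 by ring, hsum, Real.sqrt_one]
  have hz0 : z ≠ 0 := by
    intro h; rw [h] at habs; simp at habs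
  refine ⟨z.arg, ?_⟩
  have hc : Real.cos z.arg = w 0 := by rw [Complex.cos_arg hz0, habs]; simp [hz]
  have hs : Real.sin z.arg = w 1 := by rw [Complex.sin_arg, habs]; simp [hz]
  ext i; fin_cases i
  · simpa [eTheta, mk2] using hc
  · simpa [eTheta, mk2] using hs

lemma inner_expand (g : E2) (α β : ℝ) :
    ⟪g, eTheta β⟫ = ⟪g, eTheta α⟫ * Real.cos (β - α) + det2 (eTheta α) g * Real.sin (β - α) := by
  simp only [PiLp.inner_apply, RCLike.inner_apply, conj_trivial, Fin.sum_univ_two,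
    eTheta0, eTheta1, det2, Real.cos_sub, Real.sin_sub]
  linear_combination (-(g 0 * Real.cos β + g 1 * Real.sin β)) * (Real.sin_sq_add_cos_sq α)

lemma sign_lemma {Fv D : ℝ} (hFv : 0 < Fv) (ψ : ℝ) :
    0 ≤ Fv * Real.cos ψ + D * Real.sin ψ ↔ 0 ≤ Real.cos (ψ - Real.arctan (D / Fv)) := by
  set x : ℝ := D / Fv with hx
  have hD : D = Fv * x := by rw [hx]; field_simp [hFv.ne']
  have hcos : Real.cos (Real.arctan x) = 1 / Real.sqrt (1 + x^2) := Real.cos_arctan x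
  have hsin : Real.sin (Real.arctan x) = x / Real.sqrt (1 + x^2) := Real.sin_arctan x
  have hsq : (0:ℝ) < Real.sqrt (1 + x^2) := Real.sqrt_pos.mpr (by positivity)
  have key : Fv * Real.cos ψ + D * Real.sin ψ
      = (Fv * Real.sqrt (1 + x^2)) * Real.cos (ψ - Real.arctan x) := by
    rw [Real.cos_sub, hcos, hsin, hD]
    field_simp
  rw [key]
  constructor
  · intro h; exact nonneg_of_mul_nonneg_right h (by positivity)
  · intro h; positivity

lemma cos_between {c φ₁ φ φ₂ : ℝ} (h1 : φ₁ ≤ φ) (h2 : φ ≤ φ₂) (hw : φ₂ - φ₁ < π)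
    (hc1 : 0 ≤ Real.cos (c - φ₁)) (hc2 : 0 ≤ Real.cos (c - φ₂)) : 0 ≤ Real.cos (c - φ) := by
  have hp : (0:ℝ) < 2 * π := by positivity
  set x : ℝ := c - φ with hxdef
  set k : ℤ := toIocDiv hp (-π) x with hk
  set x' : ℝ := x - k * (2 * π) with hx'
  set x₁' : ℝ := (c - φ₂) - k * (2 * π) with hx1'
  set x₂' : ℝ := (c - φ₁) - k * (2 * π) with hx2'
  have hmem : x' ∈ Set.Ioc (-π) (-π + 2 * π) := by
    have := toIocMod_mem_Ioc hp (-π) x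
    have heq : toIocMod hp (-π) x = x' := by
      rw [toIocMod, hx', zsmul_eq_mul]
    rwa [heq] at this
  have hcx : Real.cos x' = Real.cos x := by
    rw [hx', sub_eq_add_neg, ← neg_mul, ← Int.cast_neg, Real.cos_add_int_mul_two_pi]
  have hcx1 : Real.cos x₁' = Real.cos (c - φ₂) := by
    rw [hx1', sub_eq_add_neg, ← neg_mul, ← Int.cast_neg, Real.cos_add_int_mul_two_pi]
  have hcx2 : Real.cos x₂' = Real.cos (c - φ₁) := by
    rw [hx2', sub_eq_add_neg, ← neg_mul, ← Int.cast_neg, Real.cos_add_int_mul_two_pi]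
  rw [← hcx]
  by_contra hneg
  push_neg at hneg
  have hx'big : x' < -π/2 ∨ π/2 < x' := by
    by_contra hmid
    push_neg at hmid
    exact absurd (Real.cos_nonneg_of_mem_Icc ⟨by linarith [hmid.1], hmid.2⟩) (not_le.mpr hneg)
  have h12 : x₂' - x₁' = φ₂ - φ₁ := by rw [hx1', hx2']; ring
  have hord1 : x' ≤ x₂' := by rw [hx', hx2', hxdef]; linarith
  have hord2 : x₁' ≤ x' := by rw [hx', hx1', hxdef]; linarith
  rcases hx'big with hB | hA
  · -- x' < -π/2, x' > -π
    have hgt : -π < x' := hmem.1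
    have hx1le : x₁' ≤ -(π + π/2) := by
      by_contra hlt
      push_neg at hlt
      have : Real.cos x₁' < 0 := by
        rw [← Real.cos_neg]
        apply Real.cos_neg_of_pi_div_two_lt_of_lt <;> linarith
      linarith [hcx1 ▸ this, hc2]
    have : Real.cos x₂' < 0 := by
      rw [← Real.cos_neg]
      apply Real.cos_neg_of_pi_div_two_lt_of_lt <;> linarith
    linarith [hcx2 ▸ this, hc1]
  · -- π/2 < x', x' ≤ π
    have hle : x' ≤ -π + 2 * π := hmem.2
    have hx2ge : π + π/2 ≤ x₂' := by
      by_contra hlt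
      push_neg at hlt
      have : Real.cos x₂' < 0 := by
        apply Real.cos_neg_of_pi_div_two_lt_of_lt <;> linarith
      linarith [hcx2 ▸ this, hc1]
    have : Real.cos x₁' < 0 := by
      apply Real.cos_neg_of_pi_div_two_lt_of_lt <;> linarith
    linarith [hcx1 ▸ this, hc2]

lemma fderiv_iff_cos {G : E2 → ℝ} (hG : IsAsymNorm G) (hC1 : ContDiffOn ℝ 1 G {(0:E2)}ᶜ)
    (θ θ' : ℝ) :
    (0 ≤ fderiv ℝ G (eTheta θ) (eTheta θ')) ↔ 0 ≤ Real.cos ((θ' - θ) - phiF G θ) := by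
  set g : E2 := gradient G (eTheta θ) with hg
  have h1 : fderiv ℝ G (eTheta θ) (eTheta θ') = ⟪g, eTheta θ'⟫ := (grad_inner G _ _).symm
  have heuler : ⟪g, eTheta θ⟫ = G (eTheta θ) := by
    rw [grad_inner]; exact euler_id hG.2.1 hC1 (eTheta_ne_zero θ)
  have h2 := inner_expand g θ θ'
  rw [heuler] at h2
  have hpos : 0 < G (eTheta θ) := hG.2.2.2 _ (eTheta_ne_zero θ)
  have hdet : det2 (eTheta θ) g * Real.sin (θ' - θ) = det2 (eTheta θ) g * Real.sin (θ' - θ) := rfl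
  rw [h1, h2]
  exact sign_lemma hpos (θ' - θ)

lemma acute_iff_cos {G : E2 → ℝ} (hG : IsAsymNorm G) (hC1 : ContDiffOn ℝ 1 G {(0:E2)}ᶜ)
    {u v : E2} (hu : u ≠ 0) (hv : v ≠ 0) {θu θv : ℝ}
    (hθu : eTheta θu = ‖u‖⁻¹ • u) (hθv : eTheta θv = ‖v‖⁻¹ • v) :
    IsAcute G u v ↔
      (0 ≤ Real.cos ((θv - θu) - phiF G θu) ∧ 0 ≤ Real.cos ((θu - θv) - phiF G θv)) := by
  have hnu : (0:ℝ) < ‖u‖ := norm_pos_iff.mpr hu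
  have hnv : (0:ℝ) < ‖v‖ := norm_pos_iff.mpr hv
  have hfu : fderiv ℝ G (eTheta θu) = fderiv ℝ G u := by
    rw [hθu]; exact fderiv_homog hG.2.1 hC1 hu (by positivity)
  have hfv : fderiv ℝ G (eTheta θv) = fderiv ℝ G v := by
    rw [hθv]; exact fderiv_homog hG.2.1 hC1 hv (by positivity)
  have hveq : v = ‖v‖ • eTheta θv := by rw [hθv, smul_inv_smul₀ hnv.ne']
  have hueq : u = ‖u‖ • eTheta θu := by rw [hθu, smul_inv_smul₀ hnu.ne']
  have key1 : (0 ≤ fderiv ℝ G u v) ↔ 0 ≤ fderiv ℝ G (eTheta θu) (eTheta θv) := by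
    rw [← hfu]
    conv_lhs => rw [hveq]
    rw [_root_.map_smul, smul_eq_mul]
    exact mul_nonneg_iff_of_pos_left hnv
  have key2 : (0 ≤ fderiv ℝ G v u) ↔ 0 ≤ fderiv ℝ G (eTheta θv) (eTheta θu) := by
    rw [← hfv]
    conv_lhs => rw [hueq]
    rw [_root_.map_smul, smul_eq_mul]
    exact mul_nonneg_iff_of_pos_left hnu
  constructor
  · intro hac
    constructor
    · rw [← fderiv_iff_cos hG hC1, ← key1]
      exact deriv_nonneg_of_min hC1 hu v (fun δ hδ => (hac δ hδ).1)
    · rw [← fderiv_iff_cos hG hC1, ← key2]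
      exact deriv_nonneg_of_min hC1 hv u (fun δ hδ => (hac δ hδ).2)
  · rintro ⟨hcu, hcv⟩
    intro δ hδ
    constructor
    · exact min_of_deriv_nonneg hG.1 hC1 hu v (key1.mpr ((fderiv_iff_cos hG hC1 _ _).mpr hcu)) δ hδ
    · exact min_of_deriv_nonneg hG.1 hC1 hv u (key2.mpr ((fderiv_iff_cos hG hC1 _ _).mpr hcv)) δ hδ

/-- if `min_i φ_{F_i} ≤ φ_F ≤ max_i φ_{F_i}` everywhere on `ℝ`, then any
pair `u, v` forming an `F_i`-acute angle for every `i` also forms an `F`-acute angle. -/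
theorem stmt15 (r : ℕ) (hr : 0 < r) (F : E2 → ℝ) (Fs : Fin r → E2 → ℝ)
    (hF : IsAsymNorm F) (hFC1 : ContDiffOn ℝ 1 F {(0 : E2)}ᶜ)
    (hFs : ∀ i, IsAsymNorm (Fs i)) (hFsC1 : ∀ i, ContDiffOn ℝ 1 (Fs i) {(0 : E2)}ᶜ)
    (hphi : ∀ θ : ℝ, (∃ i, phiF (Fs i) θ ≤ phiF F θ) ∧ (∃ i, phiF F θ ≤ phiF (Fs i) θ)) :
    ∀ u v : E2, u ≠ 0 → v ≠ 0 → (∀ i, IsAcute (Fs i) u v) → IsAcute F u v := by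
  intro u v hu hv hac
  obtain ⟨θu, hθu⟩ := exists_theta hu
  obtain ⟨θv, hθv⟩ := exists_theta hv
  have hcond : ∀ i, (0 ≤ Real.cos ((θv - θu) - phiF (Fs i) θu) ∧
      0 ≤ Real.cos ((θu - θv) - phiF (Fs i) θv)) := fun i =>
    (acute_iff_cos (hFs i) (hFsC1 i) hu hv hθu hθv).mp (hac i)
  rw [acute_iff_cos hF hFC1 hu hv hθu hθv]
  have harc : ∀ (G : E2 → ℝ) (θ : ℝ), -(π/2) < phiF G θ ∧ phiF G θ < π/2 := fun G θ =>
    ⟨Real.neg_pi_div_two_lt_arctan _, Real.arctan_lt_pi_div_two _⟩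
  constructor
  · obtain ⟨i₁, hi₁⟩ := (hphi θu).1
    obtain ⟨i₂, hi₂⟩ := (hphi θu).2
    refine cos_between hi₁ hi₂ ?_ (hcond i₁).1 (hcond i₂).1
    have a := harc (Fs i₁) θu; have b := harc (Fs i₂) θu
    linarith [a.1, b.2]
  · obtain ⟨i₁, hi₁⟩ := (hphi θv).1
    obtain ⟨i₂, hi₂⟩ := (hphi θv).2
    refine cos_between hi₁ hi₂ ?_ (hcond i₁).2 (hcond i₂).2
    have a := harc (Fs i₁) θv; have b := harc (Fs i₂) θv
    linarith [a.1, b.2]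
end
end

section
/- Let κ ≥ 1 and let F be the anisotropic euclidean norm F(x,y) := √(κ⁻¹x² + κy²), associated to the diagonal matrix with entries (κ⁻¹, κ). Then κ(F) = κ, and the function φ_F attains its maximum over ℝ at θ_κ := arctan(κ⁻¹), with maximum value φ_F(θ_κ) = arctan((κ − κ⁻¹)/2). -/
open scoped RealInnerProductSpace
open MeasureTheory Real

noncomputable section

lemma mk2_zero (a b : ℝ) : mk2 a b 0 = a := rfl
lemma mk2_one (a b : ℝ) : mk2 a b 1 = b := rfl

set_option maxHeartbeats 2000000 in
lemma aux_grad (κ : ℝ) (hκ : 0 < κ) (p : E2)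
    (hQ : 0 < κ⁻¹ * (p 0)^2 + κ * (p 1)^2) :
    HasGradientAt (fun w : E2 => Real.sqrt (κ⁻¹ * (w 0)^2 + κ * (w 1)^2))
      (((Real.sqrt (κ⁻¹ * (p 0)^2 + κ * (p 1)^2))⁻¹ : ℝ) •
        (mk2 (κ⁻¹ * p 0) (κ * p 1) : E2)) p := by
  have h0 : HasFDerivAt (fun w : E2 => w 0) (EuclideanSpace.proj (0:Fin 2) : E2 →L[ℝ] ℝ) p := by
    simpa using (EuclideanSpace.proj (0:Fin 2) : E2 →L[ℝ] ℝ).hasFDerivAt (x := p)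
  have h1 : HasFDerivAt (fun w : E2 => w 1) (EuclideanSpace.proj (1:Fin 2) : E2 →L[ℝ] ℝ) p := by
    simpa using (EuclideanSpace.proj (1:Fin 2) : E2 →L[ℝ] ℝ).hasFDerivAt (x := p)
  have hQd : HasFDerivAt (fun w : E2 => κ⁻¹ * (w 0)^2 + κ * (w 1)^2)
      (κ⁻¹ • (p 0 • (EuclideanSpace.proj (0:Fin 2) : E2 →L[ℝ] ℝ)
            + p 0 • (EuclideanSpace.proj (0:Fin 2) : E2 →L[ℝ] ℝ))
      + κ • (p 1 • (EuclideanSpace.proj (1:Fin 2) : E2 →L[ℝ] ℝ)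
            + p 1 • (EuclideanSpace.proj (1:Fin 2) : E2 →L[ℝ] ℝ))) p := by
    have := ((h0.mul h0).const_mul κ⁻¹).add ((h1.mul h1).const_mul κ)
    simp only [pow_two]
    exact this
  have hs := (Real.hasDerivAt_sqrt hQ.ne').comp_hasFDerivAt p hQd
  rw [hasGradientAt_iff_hasFDerivAt]
  refine hs.congr_fderiv ?_
  apply ContinuousLinearMap.ext
  intro v
  have hsq : Real.sqrt (κ⁻¹ * (p 0)^2 + κ * (p 1)^2) ≠ 0 := (Real.sqrt_pos.2 hQ).ne'
  have projap : ∀ (i : Fin 2) (w : E2), (EuclideanSpace.proj i : E2 →L[ℝ] ℝ) w = w i :=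
    fun i w => rfl
  set s := Real.sqrt (κ⁻¹ * (p 0)^2 + κ * (p 1)^2) with hsdef
  simp only [InnerProductSpace.toDual_apply_apply, PiLp.toLp_apply, PiLp.inner_apply, RCLike.inner_apply,
    Fin.sum_univ_two, ContinuousLinearMap.smul_apply, ContinuousLinearMap.add_apply,
    projap, PiLp.smul_apply, smul_eq_mul, mk2,
    Matrix.cons_val_zero, Matrix.cons_val_one, Matrix.head_cons, starRingEnd_apply,
    star_trivial, one_div]
  field_simp [hκ.ne']
  ring

lemma aux_phi (κ : ℝ) (hκ : 0 < κ) (F : E2 → ℝ)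
    (hF : ∀ w : E2, F w = Real.sqrt (κ⁻¹ * (w 0) ^ 2 + κ * (w 1) ^ 2)) (θ : ℝ) :
    phiF F θ = Real.arctan ((κ - κ⁻¹) * Real.sin θ * Real.cos θ /
      (κ⁻¹ * Real.cos θ ^ 2 + κ * Real.sin θ ^ 2)) := by
  have hFeq : F = fun w : E2 => Real.sqrt (κ⁻¹ * (w 0)^2 + κ * (w 1)^2) := funext hF
  have hQ : 0 < κ⁻¹ * Real.cos θ ^ 2 + κ * Real.sin θ ^ 2 := by
    by_cases hc : Real.cos θ = 0
    · have hs2 : Real.sin θ ^ 2 = 1 := by nlinarith [Real.sin_sq_add_cos_sq θ]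
      rw [hc, hs2]; simpa using hκ
    · have h1 : 0 < κ⁻¹ * Real.cos θ ^ 2 := by positivity
      nlinarith [mul_nonneg hκ.le (sq_nonneg (Real.sin θ))]
  have hQ' : 0 < κ⁻¹ * ((eTheta θ) 0)^2 + κ * ((eTheta θ) 1)^2 := hQ
  have hgrad : gradient F (eTheta θ) =
      ((Real.sqrt (κ⁻¹ * Real.cos θ ^ 2 + κ * Real.sin θ ^ 2))⁻¹ : ℝ) •
        (mk2 (κ⁻¹ * Real.cos θ) (κ * Real.sin θ) : E2) := by
    rw [hFeq]
    exact (aux_grad κ hκ (eTheta θ) hQ').gradient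
  unfold phiF det2
  rw [hgrad, hF]
  congr 1
  set Q := κ⁻¹ * Real.cos θ ^ 2 + κ * Real.sin θ ^ 2 with hQdef
  have e0 : (eTheta θ) 0 = Real.cos θ := rfl
  have e1 : (eTheta θ) 1 = Real.sin θ := rfl
  have m0 : (((Real.sqrt Q)⁻¹ : ℝ) •
      (mk2 (κ⁻¹ * Real.cos θ) (κ * Real.sin θ) : E2)) 0
      = (Real.sqrt Q)⁻¹ * (κ⁻¹ * Real.cos θ) := rfl
  have m1 : (((Real.sqrt Q)⁻¹ : ℝ) •
      (mk2 (κ⁻¹ * Real.cos θ) (κ * Real.sin θ) : E2)) 1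
      = (Real.sqrt Q)⁻¹ * (κ * Real.sin θ) := rfl
  rw [e0, e1, m0, m1]
  have hss : Real.sqrt Q * Real.sqrt Q = Q := Real.mul_self_sqrt hQ.le
  have hnum : Real.cos θ * ((Real.sqrt Q)⁻¹ * (κ * Real.sin θ))
      - Real.sin θ * ((Real.sqrt Q)⁻¹ * (κ⁻¹ * Real.cos θ))
      = ((κ - κ⁻¹) * Real.sin θ * Real.cos θ) * (Real.sqrt Q)⁻¹ := by ring
  rw [hnum, ← div_eq_mul_inv, div_div, hss]

lemma aux_norm_one (u : E2) (hu : ‖u‖ = 1) : (u 0)^2 + (u 1)^2 = 1 := by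
  rw [EuclideanSpace.norm_eq] at hu
  simp only [Fin.sum_univ_two, Real.norm_eq_abs, sq_abs] at hu
  have h := congrArg (· ^ 2) hu
  simpa [Real.sq_sqrt (by positivity : (0:ℝ) ≤ (u 0)^2 + (u 1)^2)] using h

/-- for `F(x,y) = √(κ⁻¹x² + κy²)` with `κ ≥ 1`, one has `κ(F) = κ` and
`φ_F` attains its maximum over `ℝ` at `θ_κ = arctan(κ⁻¹)`, with value
`arctan((κ − κ⁻¹)/2)`. -/
theorem stmt16 (κ : ℝ) (hκ : 1 ≤ κ) (F : E2 → ℝ)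
    (hF : ∀ w : E2, F w = Real.sqrt (κ⁻¹ * (w 0) ^ 2 + κ * (w 1) ^ 2)) :
    kappa F = κ ∧
    (∀ θ : ℝ, phiF F θ ≤ phiF F (Real.arctan κ⁻¹)) ∧
    phiF F (Real.arctan κ⁻¹) = Real.arctan ((κ - κ⁻¹) / 2) := by
  have hκ0 : (0:ℝ) < κ := lt_of_lt_of_le one_pos hκ
  have hκκ : κ⁻¹ ≤ κ := le_trans (inv_le_one_of_one_le₀ hκ) hκ
  have hsub : (0:ℝ) ≤ κ - κ⁻¹ := sub_nonneg.2 hκκ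
  have hval : (κ - κ⁻¹) * Real.sin (Real.arctan κ⁻¹) * Real.cos (Real.arctan κ⁻¹) /
      (κ⁻¹ * Real.cos (Real.arctan κ⁻¹) ^ 2 + κ * Real.sin (Real.arctan κ⁻¹) ^ 2)
      = (κ - κ⁻¹) / 2 := by
    rw [Real.sin_arctan, Real.cos_arctan]
    have hd : Real.sqrt (1 + κ⁻¹ ^ 2) ≠ 0 := by positivity
    have hd2 : Real.sqrt (1 + κ⁻¹ ^ 2) ^ 2 = 1 + κ⁻¹ ^ 2 :=
      Real.sq_sqrt (by positivity)
    have hd2' : Real.sqrt (κ^2+1) * Real.sqrt (κ^2+1) = κ^2+1 :=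
      Real.mul_self_sqrt (by positivity)
    field_simp
    ring_nf
  have hphival : phiF F (Real.arctan κ⁻¹) = Real.arctan ((κ - κ⁻¹) / 2) := by
    rw [aux_phi κ hκ0 F hF, hval]
  refine ⟨?_, ?_, hphival⟩
  · have hbound : ∀ r ∈ {r : ℝ | ∃ u v : E2, ‖u‖ = 1 ∧ ‖v‖ = 1 ∧ r = F u / F v}, r ≤ κ := by
      rintro r ⟨u, v, hu, hv, rfl⟩
      have hu2 := aux_norm_one u hu
      have hv2 := aux_norm_one v hv
      have hFu : F u ≤ Real.sqrt κ := by
        rw [hF]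
        apply Real.sqrt_le_sqrt
        nlinarith [sq_nonneg (u 0), sq_nonneg (u 1), inv_pos.2 hκ0]
      have hFv : Real.sqrt κ⁻¹ ≤ F v := by
        rw [hF]
        apply Real.sqrt_le_sqrt
        nlinarith [sq_nonneg (v 0), sq_nonneg (v 1)]
      have hpos : (0:ℝ) < Real.sqrt κ⁻¹ := Real.sqrt_pos.2 (inv_pos.2 hκ0)
      calc F u / F v ≤ Real.sqrt κ / Real.sqrt κ⁻¹ :=
            div_le_div₀ (Real.sqrt_nonneg κ) hFu hpos hFv
        _ = κ := by
            rw [Real.sqrt_inv, div_eq_mul_inv, inv_inv, Real.mul_self_sqrt hκ0.le]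
    have hmem : κ ∈ {r : ℝ | ∃ u v : E2, ‖u‖ = 1 ∧ ‖v‖ = 1 ∧ r = F u / F v} := by
      refine ⟨mk2 0 1, mk2 1 0, ?_, ?_, ?_⟩
      · rw [EuclideanSpace.norm_eq]
        simp [mk2, Fin.sum_univ_two]
      · rw [EuclideanSpace.norm_eq]
        simp [mk2, Fin.sum_univ_two]
      · rw [hF, hF]
        simp only [mk2_zero, mk2_one]
        norm_num
        exact (Real.mul_self_sqrt hκ0.le).symm
    exact le_antisymm (csSup_le ⟨κ, hmem⟩ hbound) (le_csSup ⟨κ, hbound⟩ hmem)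
  · intro θ
    rw [aux_phi κ hκ0 F hF θ, hphival]
    apply Real.arctan_strictMono.monotone
    have hQ : 0 < κ⁻¹ * Real.cos θ ^ 2 + κ * Real.sin θ ^ 2 := by
      by_cases hc : Real.cos θ = 0
      · have hs2 : Real.sin θ ^ 2 = 1 := by nlinarith [Real.sin_sq_add_cos_sq θ]
        rw [hc, hs2]; simpa using hκ0
      · have h1 : 0 < κ⁻¹ * Real.cos θ ^ 2 := by positivity
        nlinarith [mul_nonneg hκ0.le (sq_nonneg (Real.sin θ))]
    rw [div_le_iff₀ hQ]
    have heq : (κ - κ⁻¹) / 2 * (κ⁻¹ * Real.cos θ ^ 2 + κ * Real.sin θ ^ 2)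
        - (κ - κ⁻¹) * Real.sin θ * Real.cos θ
        = (κ - κ⁻¹) * (κ⁻¹ * (Real.cos θ - κ * Real.sin θ) ^ 2) / 2 := by
      field_simp
      ring
    nlinarith [mul_nonneg hsub (mul_nonneg (inv_pos.2 hκ0).le
      (sq_nonneg (Real.cos θ - κ * Real.sin θ)))]
end
end

section
/- There exists an absolute constant C such that the following holds. Let 0 < ε ≤ π/6 and let Φ : [0, 2π] → (0, π) be continuous with: (i) Φ(t) ≥ 2ε for all t; (ii) t ↦ Φ(t) − t non-increasing on [0, 2π]; (iii) ∫ from t to t' of cot(Φ(s)) ds ≤ |ln ε| for all 0 ≤ t ≤ t' ≤ 2π. Then any finite sequence 0 = t₀ < t₁ < ⋯ < t_N ≤ 2π satisfying Φ(t_{n+1}) = ε + (t_{n+1} − t_n) for all 0 ≤ n < N has length N ≤ C·|ln ε|. -/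
open scoped RealInnerProductSpace
open MeasureTheory Real

noncomputable section

lemma aux_cot_anti {p q : ℝ} (hp : 0 < p) (hpq : p ≤ q) (hq : q < Real.pi) :
    Real.cot q ≤ Real.cot p := by
  have hsp : 0 < Real.sin p := Real.sin_pos_of_pos_of_lt_pi hp (lt_of_le_of_lt hpq hq)
  have hsq : 0 < Real.sin q := Real.sin_pos_of_pos_of_lt_pi (lt_of_lt_of_le hp hpq) hq
  have h : 0 ≤ Real.sin (q - p) :=
    Real.sin_nonneg_of_nonneg_of_le_pi (by linarith) (by linarith)
  rw [Real.sin_sub] at h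
  rw [Real.cot_eq_cos_div_sin, Real.cot_eq_cos_div_sin, div_le_div_iff₀ hsq hsp]
  nlinarith

lemma aux_cot_lb {q : ℝ} (h0 : 0 < q) (h2 : q ≤ Real.pi / 2) :
    1 / q - Real.pi / 2 ≤ Real.cot q := by
  have hπ := Real.pi_pos
  have hqπ : q < Real.pi := by linarith
  have hs : 0 < Real.sin q := Real.sin_pos_of_pos_of_lt_pi h0 hqπ
  have hsle : Real.sin q ≤ q := Real.sin_le h0.le
  have hhalf : Real.sin (q / 2) ≤ Real.cos (q / 2) := by
    rw [← Real.sin_pi_div_two_sub]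
    exact Real.sin_le_sin_of_le_of_le_pi_div_two (by linarith) (by linarith) (by linarith)
  have hs2 : 0 ≤ Real.sin (q / 2) :=
    Real.sin_nonneg_of_nonneg_of_le_pi (by linarith) (by linarith)
  have e1 : Real.cos q = 2 * Real.cos (q / 2) ^ 2 - 1 := by
    have h := Real.cos_two_mul (q / 2)
    rw [show 2 * (q / 2) = q by ring] at h
    exact h
  have e2 : Real.sin q = 2 * Real.sin (q / 2) * Real.cos (q / 2) := by
    have h := Real.sin_two_mul (q / 2)
    rw [show 2 * (q / 2) = q by ring] at h
    exact h
  have epyth := Real.sin_sq_add_cos_sq (q / 2)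
  have key2 : 1 - Real.cos q ≤ Real.pi / 2 * Real.sin q := by
    nlinarith [Real.pi_gt_three, mul_nonneg hs2 (sub_nonneg.mpr hhalf), sq_nonneg (Real.sin (q / 2))]
  rw [Real.cot_eq_cos_div_sin, le_div_iff₀ hs]
  have h1' : 1 / q * Real.sin q ≤ 1 := by
    rw [div_mul_eq_mul_div, one_mul]; exact (div_le_one h0).mpr hsle
  nlinarith [key2, h1']

set_option maxHeartbeats 2000000 in
/-- bound on the length of the sequences produced by the stencil
construction. There is an absolute constant `C` such that any finite sequence
`0 = t₀ < t₁ < ⋯ < t_N ≤ 2π` with `Φ(t_{n+1}) = ε + (t_{n+1} − t_n)` satisfies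
`N ≤ C·|ln ε|`, whenever `Φ : [0,2π] → (0,π)` is continuous, `Φ ≥ 2ε`, `Φ − id` is
non-increasing, and `∫_t^{t'} cot Φ ≤ |ln ε|` for all `0 ≤ t ≤ t' ≤ 2π`. -/
theorem stmt17 : ∃ C : ℝ, 0 < C ∧
    ∀ ε : ℝ, 0 < ε → ε ≤ Real.pi / 6 →
    ∀ Φ : ℝ → ℝ,
      ContinuousOn Φ (Set.Icc 0 (2 * Real.pi)) →
      (∀ t ∈ Set.Icc (0:ℝ) (2 * Real.pi), Φ t ∈ Set.Ioo 0 Real.pi) →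
      (∀ t ∈ Set.Icc (0:ℝ) (2 * Real.pi), 2 * ε ≤ Φ t) →
      (∀ t ∈ Set.Icc (0:ℝ) (2 * Real.pi), ∀ t' ∈ Set.Icc (0:ℝ) (2 * Real.pi),
        t ≤ t' → Φ t' - t' ≤ Φ t - t) →
      (∀ t t' : ℝ, 0 ≤ t → t ≤ t' → t' ≤ 2 * Real.pi →
        (∫ s in t..t', Real.cot (Φ s)) ≤ |Real.log ε|) →
    ∀ N : ℕ, ∀ t : ℕ → ℝ,
      t 0 = 0 →
      (∀ n : ℕ, n < N → t n < t (n + 1)) →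
      t N ≤ 2 * Real.pi →
      (∀ n : ℕ, n < N → Φ (t (n + 1)) = ε + (t (n + 1) - t n)) →
      (N : ℝ) ≤ C * |Real.log ε| := by
  classical
  refine ⟨10000, by norm_num, ?_⟩
  intro ε hε0 hε6 Φ hΦc hΦmem hΦ2ε hΦmono hΦint N t ht0 htlt htN hΦstep
  set L := |Real.log ε| with hLdef
  have hπ2 : (3.14 : ℝ) < π := Real.pi_gt_d2
  have hπ3 : π < 3.15 := Real.pi_lt_d2
  have hε1 : ε < 1 := by linarith
  have hlogε : Real.log ε < 0 := Real.log_neg hε0 hε1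
  have hLeq : L = -Real.log ε := abs_of_neg hlogε
  have hL : (0.475 : ℝ) ≤ L := by
    have h := Real.log_le_sub_one_of_pos hε0
    rw [hLeq]; linarith
  -- basic facts about t
  have tmono : ∀ j, j ≤ N → ∀ i, i ≤ j → t i ≤ t j := by
    intro j
    induction j with
    | zero => intro _ i hi; simp [Nat.le_zero.mp hi]
    | succ k ih =>
      intro hk i hi
      rcases Nat.eq_or_lt_of_le hi with rfl | h
      · exact le_rfl
      · exact (ih (by omega) i (by omega)).trans (htlt k (by omega)).le
  have tnn : ∀ n, n ≤ N → 0 ≤ t n := by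
    intro n h; rw [← ht0]; exact tmono n h 0 (Nat.zero_le n)
  have tub : ∀ n, n ≤ N → t n ≤ 2 * π := fun n h => (tmono N le_rfl n h).trans htN
  have tmem : ∀ n, n ≤ N → t n ∈ Set.Icc (0:ℝ) (2 * π) := fun n h => ⟨tnn n h, tub n h⟩
  -- continuity and integrability of cot ∘ Φ
  have hcotcont : ContinuousOn (fun s => Real.cot (Φ s)) (Set.Icc 0 (2 * π)) := by
    have h1 : ContinuousOn (fun s => Real.cos (Φ s)) (Set.Icc 0 (2 * π)) :=
      Real.continuous_cos.comp_continuousOn hΦc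
    have h2 : ContinuousOn (fun s => Real.sin (Φ s)) (Set.Icc 0 (2 * π)) :=
      Real.continuous_sin.comp_continuousOn hΦc
    have h3 : ∀ s ∈ Set.Icc (0:ℝ) (2 * π), Real.sin (Φ s) ≠ 0 := fun s hs =>
      (Real.sin_pos_of_pos_of_lt_pi (hΦmem s hs).1 (hΦmem s hs).2).ne'
    simp only [Real.cot_eq_cos_div_sin]; exact h1.div h2 h3
  have hIcot : ∀ i j, i ≤ j → j ≤ N →
      IntervalIntegrable (fun s => Real.cot (Φ s)) volume (t i) (t j) := by
    intro i j hij hjN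
    apply (hcotcont.mono ?_).intervalIntegrable
    rw [Set.uIcc_of_le (tmono j hjN i hij)]
    intro s hs
    exact ⟨le_trans (tnn i (hij.trans hjN)) hs.1, hs.2.trans (tub j hjN)⟩
  -- per-step lower bound on the integral
  have step : ∀ n, n < N → Φ (t n) + (t (n + 1) - t n) ≤ π / 2 →
      (Real.log (Φ (t (n + 1))) - Real.log (Φ (t n))) / 2 + Real.log 2 / 2
        - π / 2 * (t (n + 1) - t n) ≤ ∫ s in (t n)..(t (n + 1)), Real.cot (Φ s) := by
    intro n hn hgood
    have hnN : n ≤ N := hn.le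
    have hn1N : n + 1 ≤ N := hn
    have hab : t n < t (n + 1) := htlt n hn
    have haI := tmem n hnN
    have hbI := tmem (n + 1) hn1N
    set x := Φ (t n) with hxdef
    set y := Φ (t (n + 1)) with hydef
    have hx2 : 2 * ε ≤ x := hΦ2ε _ haI
    have hy2 : 2 * ε ≤ y := hΦ2ε _ hbI
    have hxpos : 0 < x := by linarith
    have hypos : 0 < y := by linarith
    have hyeq : y = ε + (t (n + 1) - t n) := hΦstep n hn
    -- pointwise comparison
    have hpt : ∀ s ∈ Set.Icc (t n) (t (n + 1)),
        (s + (x - t n))⁻¹ - π / 2 ≤ Real.cot (Φ s) := by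
      intro s hs
      have hsI : s ∈ Set.Icc (0:ℝ) (2 * π) := ⟨haI.1.trans hs.1, hs.2.trans hbI.2⟩
      have hΦs := hΦmem s hsI
      have hub : Φ s ≤ s + (x - t n) := by
        have h := hΦmono (t n) haI s hsI hs.1
        linarith
      have hupos : 0 < s + (x - t n) := by
        have := hs.1; linarith
      have huπ2 : s + (x - t n) ≤ π / 2 := by
        have := hs.2; linarith
      have c1 := aux_cot_anti hΦs.1 hub (by linarith [Real.pi_pos])
      have c2 := aux_cot_lb hupos huπ2
      have : 1 / (s + (x - t n)) = (s + (x - t n))⁻¹ := one_div _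
      linarith
    -- integrability of comparison function
    have hfi : IntervalIntegrable (fun s => (s + (x - t n))⁻¹) volume (t n) (t (n + 1)) := by
      apply ContinuousOn.intervalIntegrable
      apply ContinuousOn.inv₀ (by fun_prop)
      intro s hs
      rw [Set.uIcc_of_le hab.le] at hs
      have h1 := hs.1
      intro hzero
      linarith
    have hf : IntervalIntegrable (fun s => (s + (x - t n))⁻¹ - π / 2) volume (t n) (t (n + 1)) :=
      hfi.sub intervalIntegrable_const
    have hg := hIcot n (n + 1) (by omega) hn1N
    have hmono' := intervalIntegral.integral_mono_on hab.le hf hg hpt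
    -- compute the comparison integral
    have hinv : (∫ s in (t n)..(t (n + 1)), (s + (x - t n))⁻¹)
        = Real.log (x + (t (n + 1) - t n)) - Real.log x := by
      rw [intervalIntegral.integral_comp_add_right (fun u => u⁻¹) (x - t n)]
      rw [show t n + (x - t n) = x by ring, show t (n + 1) + (x - t n) = x + (t (n + 1) - t n) by ring]
      rw [integral_inv ?_]
      · rw [Real.log_div (by linarith) (ne_of_gt hxpos)]
      · rw [Set.uIcc_of_le (by linarith : x ≤ x + (t (n + 1) - t n))]
        intro h
        exact absurd h.1 (by push_neg; linarith)
    have hsplit : (∫ s in (t n)..(t (n + 1)), ((s + (x - t n))⁻¹ - π / 2))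
        = Real.log (x + (t (n + 1) - t n)) - Real.log x - π / 2 * (t (n + 1) - t n) := by
      rw [intervalIntegral.integral_sub hfi intervalIntegrable_const, hinv,
        intervalIntegral.integral_const, smul_eq_mul]
      ring
    -- the log inequality
    have hlog : (Real.log y - Real.log x) / 2 + Real.log 2 / 2
        ≤ Real.log (x + (t (n + 1) - t n)) - Real.log x := by
      have hd : x + (t (n + 1) - t n) = x + y - ε := by rw [hyeq]; ring
      have hsq : 2 * x * y ≤ (x + (t (n + 1) - t n)) ^ 2 := by
        rw [hd]
        have h5 : x / 2 + y ≤ x + y - ε := by linarith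
        have h6 : (0:ℝ) ≤ x / 2 + y := by linarith
        nlinarith [sq_nonneg (x / 2 - y), mul_self_le_mul_self h6 h5]
      have h1 : Real.log (2 * x * y) ≤ Real.log ((x + (t (n + 1) - t n)) ^ 2) :=
        Real.log_le_log (by positivity) hsq
      rw [Real.log_pow] at h1
      rw [Real.log_mul (by positivity) (ne_of_gt hypos),
        Real.log_mul two_ne_zero (ne_of_gt hxpos)] at h1
      push_cast at h1
      linarith
    rw [hsplit] at hmono'
    linarith
  -- run lemma
  have runlem : ∀ m k, m + k ≤ N →
      (∀ i, i < k → Φ (t (m + i)) + (t (m + i + 1) - t (m + i)) ≤ π / 2) →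
      ((k : ℕ) : ℝ) ≤ 100 * L := by
    intro m k hmk hgood
    have hsum : (∑ i ∈ Finset.range k, ∫ s in (t (m + i))..(t (m + i + 1)), Real.cot (Φ s))
        = ∫ s in (t (m + 0))..(t (m + k)), Real.cot (Φ s) := by
      apply intervalIntegral.sum_integral_adjacent_intervals
      intro i hi
      exact hIcot (m + i) (m + i + 1) (by omega) (by omega)
    rw [show m + 0 = m from rfl] at hsum
    have hup : (∫ s in (t m)..(t (m + k)), Real.cot (Φ s)) ≤ L :=
      hΦint (t m) (t (m + k)) (tnn m (by omega)) (tmono (m + k) hmk m (by omega)) (tub (m + k) hmk)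
    have hlow : ∀ i ∈ Finset.range k,
        (Real.log (Φ (t (m + i + 1))) - Real.log (Φ (t (m + i)))) / 2 + Real.log 2 / 2
          - π / 2 * (t (m + i + 1) - t (m + i))
          ≤ ∫ s in (t (m + i))..(t (m + i + 1)), Real.cot (Φ s) := by
      intro i hi
      have hik := Finset.mem_range.mp hi
      exact step (m + i) (by omega) (hgood i hik)
    set F : ℕ → ℝ := fun j => Real.log (Φ (t (m + j))) / 2 + (j : ℝ) * (Real.log 2 / 2)
      - π / 2 * t (m + j) with hF
    have h1 : F k - F 0 ≤ L := by
      calc F k - F 0 = ∑ i ∈ Finset.range k, (F (i + 1) - F i) :=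
            (Finset.sum_range_sub F k).symm
        _ = ∑ i ∈ Finset.range k,
            ((Real.log (Φ (t (m + i + 1))) - Real.log (Φ (t (m + i)))) / 2 + Real.log 2 / 2
              - π / 2 * (t (m + i + 1) - t (m + i))) := by
            apply Finset.sum_congr rfl
            intro i _
            simp only [hF, Nat.add_assoc]
            push_cast
            ring
        _ ≤ ∑ i ∈ Finset.range k, ∫ s in (t (m + i))..(t (m + i + 1)), Real.cot (Φ s) :=
            Finset.sum_le_sum hlow
        _ = ∫ s in (t m)..(t (m + k)), Real.cot (Φ s) := hsum
        _ ≤ L := hup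
    simp only [hF, Nat.add_zero, Nat.cast_zero, Nat.cast_ofNat, zero_mul] at h1
    -- numeric bounds
    have hmkI := tmem (m + k) hmk
    have hmI := tmem m (by omega)
    have hm1 : Real.log (Φ (t m)) ≤ Real.log π :=
      Real.log_le_log (hΦmem _ hmI).1 ((hΦmem _ hmI).2.le)
    have hm2 : Real.log (2 * ε) ≤ Real.log (Φ (t (m + k))) :=
      Real.log_le_log (by positivity) (hΦ2ε _ hmkI)
    have hm3 : Real.log (2 * ε) = Real.log 2 + Real.log ε :=
      Real.log_mul two_ne_zero (ne_of_gt hε0)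
    have hπlog : Real.log π ≤ π - 1 := by
      have := Real.log_le_sub_one_of_pos Real.pi_pos
      linarith
    have hlog2a : (0.6931471803 : ℝ) < Real.log 2 := Real.log_two_gt_d9
    have hlog2b : Real.log 2 < 0.6931471808 := Real.log_two_lt_d9
    have hk0 : (0 : ℝ) ≤ (k : ℝ) := Nat.cast_nonneg k
    have hprod : (k : ℝ) * (0.6931471803 : ℝ) ≤ (k : ℝ) * Real.log 2 :=
      mul_le_mul_of_nonneg_left hlog2a.le hk0
    have e1 : (k : ℝ) * (Real.log 2 / 2) ≤ L + Real.log (Φ (t m)) / 2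
        - Real.log (Φ (t (m + k))) / 2 + π / 2 * (t (m + k) - t m) := by linarith
    have e2 : Real.log (Φ (t m)) / 2 ≤ 1.075 := by linarith
    have e3 : - (Real.log (Φ (t (m + k))) / 2) ≤ (L - Real.log 2) / 2 := by linarith
    have hD : t (m + k) - t m ≤ 2 * π := by linarith [hmkI.2, hmI.1]
    have e4 : π / 2 * (t (m + k) - t m) ≤ π / 2 * (2 * π) :=
      mul_le_mul_of_nonneg_left hD (by positivity)
    have e5 : π / 2 * (2 * π) ≤ 9.9225 := by nlinarith [hπ3, hπ2]
    have e6 : (k : ℝ) * (Real.log 2 / 2) ≤ 1.5 * L + 10.66 := by linarith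
    linarith
  -- the set of long gaps
  set S := (Finset.range N).filter (fun i => π / 6 < t (i + 1) - t i) with hS
  have hScard : S.card ≤ 12 := by
    have h1 : (S.card : ℝ) * (π / 6) ≤ ∑ i ∈ S, (t (i + 1) - t i) := by
      have h := Finset.card_nsmul_le_sum S (fun i => t (i + 1) - t i) (π / 6)
        (fun x hx => (Finset.mem_filter.mp hx).2.le)
      simpa [nsmul_eq_mul] using h
    have h2 : (∑ i ∈ S, (t (i + 1) - t i)) ≤ ∑ i ∈ Finset.range N, (t (i + 1) - t i) := by
      apply Finset.sum_le_sum_of_subset_of_nonneg (Finset.filter_subset _ _)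
      intro i hi _
      exact sub_nonneg.mpr (htlt i (Finset.mem_range.mp hi)).le
    have h3 : (∑ i ∈ Finset.range N, (t (i + 1) - t i)) = t N := by
      rw [Finset.sum_range_sub (fun i => t i) N, ht0, sub_zero]
    have h4 : (S.card : ℝ) * (π / 6) ≤ 2 * π := by
      rw [h3] at h2; linarith [htN]
    by_contra hcon
    push_neg at hcon
    have h13 : (13 : ℝ) ≤ (S.card : ℝ) := by exact_mod_cast hcon
    have h5 : (13 : ℝ) * (π / 6) ≤ (S.card : ℝ) * (π / 6) :=
      mul_le_mul_of_nonneg_right h13 (by positivity)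
    linarith
  -- bad indices
  set P : ℕ → Prop := fun n => ¬ (Φ (t n) + (t (n + 1) - t n) ≤ π / 2) with hP
  set B := (Finset.range N).filter P with hB
  have hBsub : B ⊆ insert 0 (S ∪ S.image (· + 1)) := by
    intro n hn
    obtain ⟨hnN, hPn⟩ := Finset.mem_filter.mp hn
    rw [Finset.mem_range] at hnN
    rcases Nat.eq_zero_or_pos n with rfl | hpos
    · exact Finset.mem_insert_self _ _
    · obtain ⟨m, rfl⟩ : ∃ m, n = m + 1 := ⟨n - 1, by omega⟩
      have hyeq : Φ (t (m + 1)) = ε + (t (m + 1) - t m) := hΦstep m (by omega)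
      have hbig : π / 2 < Φ (t (m + 1)) + (t (m + 1 + 1) - t (m + 1)) := not_le.mp hPn
      have hsplit : π / 6 < t (m + 1) - t m ∨ π / 6 < t (m + 1 + 1) - t (m + 1) := by
        by_contra hcon
        push_neg at hcon
        rw [hyeq] at hbig
        linarith [hcon.1, hcon.2, hε6]
      apply Finset.mem_insert_of_mem
      rcases hsplit with h | h
      · refine Finset.mem_union_right _ (Finset.mem_image.mpr ⟨m, ?_, rfl⟩)
        exact Finset.mem_filter.mpr ⟨Finset.mem_range.mpr (by omega), h⟩
      · refine Finset.mem_union_left _ ?_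
        exact Finset.mem_filter.mpr ⟨Finset.mem_range.mpr (by omega), h⟩
  have hBcard : B.card ≤ 25 := by
    have h1 : B.card ≤ (insert 0 (S ∪ S.image (· + 1))).card := Finset.card_le_card hBsub
    have h2 : (insert 0 (S ∪ S.image (· + 1))).card ≤ (S ∪ S.image (· + 1)).card + 1 :=
      Finset.card_insert_le _ _
    have h3 : (S ∪ S.image (· + 1)).card ≤ S.card + (S.image (· + 1)).card :=
      Finset.card_union_le _ _
    have h4 : (S.image (· + 1)).card ≤ S.card := Finset.card_image_le
    omega
  -- the key induction
  have key : ∀ j : ℕ, ∀ m : ℕ, m ≤ N → ((Finset.Ico m N).filter P).card ≤ j →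
      ((N : ℝ) - (m : ℝ)) ≤ ((j : ℝ) + 1) * (100 * L + 1) := by
    have allcase : ∀ m : ℕ, m ≤ N → (∀ n ∈ Finset.Ico m N, ¬ P n) →
        ((N : ℝ) - (m : ℝ)) ≤ 100 * L := by
      intro m hm hall
      have hgood : ∀ i, i < N - m → Φ (t (m + i)) + (t (m + i + 1) - t (m + i)) ≤ π / 2 := by
        intro i hi
        have := hall (m + i) (Finset.mem_Ico.mpr ⟨by omega, by omega⟩)
        rw [hP] at this
        exact not_not.mp this
      have := runlem m (N - m) (by omega) hgood
      rw [Nat.cast_sub hm] at this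
      exact this
    intro j
    induction j with
    | zero =>
      intro m hm hcard
      have hall : ∀ n ∈ Finset.Ico m N, ¬ P n := by
        intro n hn hPn
        have hmem : n ∈ (Finset.Ico m N).filter P := Finset.mem_filter.mpr ⟨hn, hPn⟩
        have := Finset.card_pos.mpr ⟨n, hmem⟩
        omega
      have := allcase m hm hall
      push_cast
      linarith
    | succ j ih =>
      intro m hm hcard
      by_cases hall : ∀ n ∈ Finset.Ico m N, ¬ P n
      · have h := allcase m hm hall
        have hjL : (0 : ℝ) ≤ (j : ℝ) * L := mul_nonneg (Nat.cast_nonneg j) (by linarith)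
        have hj0 : (0 : ℝ) ≤ (j : ℝ) := Nat.cast_nonneg j
        have hexpand : ((j : ℝ) + 1 + 1) * (100 * L + 1)
            = 100 * ((j : ℝ) * L) + (j : ℝ) + 200 * L + 2 := by ring
        push_cast
        linarith
      · push_neg at hall
        obtain ⟨b0, hb0mem, hb0P⟩ := hall
        have hFne : ((Finset.Ico m N).filter P).Nonempty :=
          ⟨b0, Finset.mem_filter.mpr ⟨hb0mem, hb0P⟩⟩
        set Fs := (Finset.Ico m N).filter P with hFs
        set b := Fs.min' hFne with hb
        have hbF : b ∈ Fs := Fs.min'_mem hFne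
        obtain ⟨hbmem, hbP⟩ := Finset.mem_filter.mp hbF
        rw [Finset.mem_Ico] at hbmem
        have hrun : ∀ i, i < b - m → Φ (t (m + i)) + (t (m + i + 1) - t (m + i)) ≤ π / 2 := by
          intro i hi
          by_contra hcon
          have hmem : m + i ∈ Fs := Finset.mem_filter.mpr
            ⟨Finset.mem_Ico.mpr ⟨by omega, by omega⟩, hcon⟩
          have := Fs.min'_le _ hmem
          omega
        have h1 := runlem m (b - m) (by omega) hrun
        rw [Nat.cast_sub hbmem.1] at h1
        have htail : ((Finset.Ico (b + 1) N).filter P).card ≤ j := by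
          have hsub2 : insert b ((Finset.Ico (b + 1) N).filter P) ⊆ Fs := by
            intro z hz
            rcases Finset.mem_insert.mp hz with rfl | hz'
            · exact hbF
            · obtain ⟨hzm, hzP⟩ := Finset.mem_filter.mp hz'
              rw [Finset.mem_Ico] at hzm
              exact Finset.mem_filter.mpr ⟨Finset.mem_Ico.mpr ⟨by omega, hzm.2⟩, hzP⟩
          have hnotmem : b ∉ (Finset.Ico (b + 1) N).filter P := by
            intro hcon
            have := (Finset.mem_Ico.mp (Finset.mem_filter.mp hcon).1).1
            omega
          have hcc := Finset.card_le_card hsub2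
          rw [Finset.card_insert_of_notMem hnotmem] at hcc
          omega
        have h2 := ih (b + 1) (by omega) htail
        push_cast at h2 ⊢
        linarith
  -- conclusion
  have hIco : (Finset.Ico 0 N) = Finset.range N := by
    rw [Finset.range_eq_Ico]
  have hcard25 : ((Finset.Ico 0 N).filter P).card ≤ 25 := by
    rw [hIco]
    exact hBcard
  have hkey := key 25 0 (Nat.zero_le N) hcard25
  push_cast at hkey
  linarith
end
end
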